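/- arXiv:2105.07412 — 8 statements merged into one kernel-verified Lean document; each statement's English description precedes it below -/
import Mathlib

section
/- Let U(t) = ∫₀^∞ u(t,a) da denote the total population at time t ≥ 0, let U₀ = ∫₀^∞ u₀(a) da, and set Λ = (α/μ)·sup_{x ≥ 0} f(x) = α/(μ·e). Then for every t ≥ 0 one has U(t) ≤ exp(−μt)·U₀ + (1 − exp(−μt))·Λ. -/
open MeasureTheory Filter

lemma aux_x_exp_neg_le (x : ℝ) : x * Real.exp (-x) ≤ Real.exp (-1) := by
  have h : x ≤ Real.exp (x - 1) := by
    have := Real.add_one_le_exp (x - 1); linarith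
  calc x * Real.exp (-x) ≤ Real.exp (x - 1) * Real.exp (-x) :=
        mul_le_mul_of_nonneg_right h (Real.exp_pos _).le
    _ = Real.exp (-1) := by rw [← Real.exp_add]; ring_nf

/-- For the Gurtin–MacCamy model, the total population
`U(t) = ∫₀^∞ u(t,a) da` satisfies `U(t) ≤ e^{-μt} U₀ + (1 - e^{-μt}) Λ`
with `Λ = α/(μ e)`. -/
theorem gurtin_maccamy_dissipativity
    (μ α : ℝ) (hμ : 0 < μ) (hα : 0 < α)
    (f : ℝ → ℝ) (hf : ∀ x, f x = x * Real.exp (-x))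
    (β : ℝ → ℝ) (hβmeas : Measurable β) (hβnonneg : ∀ a, 0 ≤ β a)
    (hβbdd : ∃ C : ℝ, ∀ᵐ a ∂(volume.restrict (Set.Ioi 0)), β a ≤ C)
    (hβnorm : (∫ a in Set.Ioi (0:ℝ), β a * Real.exp (-μ * a)) = 1)
    (u₀ : ℝ → ℝ) (hu₀int : IntegrableOn u₀ (Set.Ioi 0))
    (hu₀nonneg : ∀ a, 0 ≤ u₀ a)
    (b : ℝ → ℝ) (hbcont : ContinuousOn b (Set.Ici 0))
    (hb : ∀ t, 0 ≤ t →
      b t = α * f (Real.exp (-μ * t) * (∫ a in Set.Ioi t, β a * u₀ (a - t))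
        + ∫ a in (0:ℝ)..t, β a * Real.exp (-μ * a) * b (t - a)))
    (u : ℝ → ℝ → ℝ)
    (hu : ∀ t a, u t a = if t ≤ a then Real.exp (-μ * t) * u₀ (a - t)
                         else Real.exp (-μ * a) * b (t - a)) :
    ∀ t, 0 ≤ t →
      (∫ a in Set.Ioi (0:ℝ), u t a)
        ≤ Real.exp (-μ * t) * (∫ a in Set.Ioi (0:ℝ), u₀ a)
          + (1 - Real.exp (-μ * t)) * (α / (μ * Real.exp 1)) := by
  -- bound on b
  have hbbd : ∀ s, 0 ≤ s → b s ≤ α / Real.exp 1 := by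
    intro s hs
    rw [hb s hs, hf]
    have := aux_x_exp_neg_le (Real.exp (-μ * s) * (∫ a in Set.Ioi s, β a * u₀ (a - s))
        + ∫ a in (0:ℝ)..s, β a * Real.exp (-μ * a) * b (s - a))
    calc α * _ ≤ α * Real.exp (-1) := mul_le_mul_of_nonneg_left this hα.le
      _ = α / Real.exp 1 := by rw [Real.exp_neg]; ring
  intro t ht
  rcases eq_or_lt_of_le ht with h0 | htpos
  · -- t = 0
    subst h0
    have : ∫ a in Set.Ioi (0:ℝ), u 0 a = ∫ a in Set.Ioi (0:ℝ), u₀ a := by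
      apply setIntegral_congr_fun measurableSet_Ioi
      intro a ha
      rw [hu]
      simp [le_of_lt (Set.mem_Ioi.mp ha)]
    rw [this]
    simp
  · -- t > 0
    -- translation facts
    have hind : Set.indicator (Set.Ici t) (fun a => u₀ (a - t))
        = fun a => Set.indicator (Set.Ici 0) u₀ (a - t) := by
      funext a
      simp [Set.indicator_apply, Set.mem_Ici, sub_nonneg]
    have hu₀Ici : IntegrableOn u₀ (Set.Ici 0) := by
      rwa [integrableOn_Ici_iff_integrableOn_Ioi]
    have hint2 : IntegrableOn (fun a => u₀ (a - t)) (Set.Ici t) := by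
      have h1 : Integrable (fun a => Set.indicator (Set.Ici 0) u₀ (a - t)) :=
        ((integrable_indicator_iff measurableSet_Ici).2 hu₀Ici).comp_sub_right t
      rw [← hind] at h1
      exact (integrable_indicator_iff measurableSet_Ici).1 h1
    have hexpc : Continuous fun a : ℝ => Real.exp (-μ * a) :=
      Real.continuous_exp.comp (continuous_const.mul continuous_id)
    have hintIci : IntegrableOn (u t) (Set.Ici t) :=
      IntegrableOn.congr_fun (hint2.const_mul (Real.exp (-μ * t)))
        (fun a ha => by rw [hu]; simp [Set.mem_Ici.mp ha]) measurableSet_Ici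
    have htransl : ∫ a in Set.Ici t, u₀ (a - t) = ∫ a in Set.Ioi 0, u₀ a := by
      rw [← integral_indicator measurableSet_Ici, hind,
        integral_sub_right_eq_self (Set.indicator (Set.Ici 0) u₀) t,
        integral_indicator measurableSet_Ici, integral_Ici_eq_integral_Ioi]
    -- continuity on the young part
    have hcont : ContinuousOn (fun a => Real.exp (-μ * a) * b (t - a)) (Set.Icc 0 t) := by
      apply ContinuousOn.mul hexpc.continuousOn
      apply hbcont.comp (Continuous.continuousOn (continuous_const.sub continuous_id))
      intro a ha
      simp only [Set.mem_Icc] at ha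
      simp only [Set.mem_Ici, id_eq, Pi.sub_apply]
      linarith [ha.2]
    have hintIoo : IntegrableOn (u t) (Set.Ioo 0 t) := by
      apply ((hcont.integrableOn_Icc).mono_set Set.Ioo_subset_Icc_self).congr_fun _
        measurableSet_Ioo
      intro a ha
      rw [hu]
      simp only [Set.mem_Ioo] at ha
      rw [if_neg (by linarith [ha.2])]
    -- split
    have hsplit : ∫ a in Set.Ioi (0:ℝ), u t a
        = (∫ a in Set.Ioo 0 t, u t a) + ∫ a in Set.Ici t, u t a := by
      rw [← setIntegral_union ((by rw [Set.disjoint_left]; rintro a ⟨_, h2⟩ h3; exact absurd (Set.mem_Ici.mp h3) (not_le.2 h2) : Disjoint (Set.Ioo (0:ℝ) t) (Set.Ici t))) measurableSet_Ici hintIoo hintIci,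
        Set.Ioo_union_Ici_eq_Ioi htpos]
    -- old part value
    have hold : ∫ a in Set.Ici t, u t a
        = Real.exp (-μ * t) * ∫ a in Set.Ioi 0, u₀ a := by
      rw [← htransl, ← integral_const_mul]
      apply setIntegral_congr_fun measurableSet_Ici
      intro a ha
      rw [hu]
      simp [Set.mem_Ici.mp ha]
    -- young part bound
    have hyoung : ∫ a in Set.Ioo 0 t, u t a
        ≤ ∫ a in Set.Ioo 0 t, Real.exp (-μ * a) * (α / Real.exp 1) := by
      apply setIntegral_mono_on hintIoo _ measurableSet_Ioo
      · intro a ha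
        simp only [Set.mem_Ioo] at ha
        rw [hu, if_neg (by linarith [ha.2])]
        exact mul_le_mul_of_nonneg_left (hbbd _ (by linarith [ha.2])) (Real.exp_pos _).le
      · exact (((hexpc.mul continuous_const).continuousOn.integrableOn_Icc).mono_set
            Set.Ioo_subset_Icc_self)
    have hcomp : ∫ a in Set.Ioo 0 t, Real.exp (-μ * a) * (α / Real.exp 1)
        = (1 - Real.exp (-μ * t)) * (α / (μ * Real.exp 1)) := by
      rw [integral_mul_const]
      have : ∫ a in Set.Ioo (0:ℝ) t, Real.exp (-μ * a)
          = ∫ a in (0:ℝ)..t, Real.exp (-μ * a) := by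
        rw [intervalIntegral.integral_of_le ht, integral_Ioc_eq_integral_Ioo]
      rw [this]
      have : ∫ a in (0:ℝ)..t, Real.exp (-μ * a) = (1 - Real.exp (-μ * t)) / μ := by
        have h1 : ∀ a : ℝ, HasDerivAt (fun x => -(1/μ) * Real.exp (-μ * x))
            (Real.exp (-μ * a)) a := by
          intro a
          have : HasDerivAt (fun x => Real.exp (-μ * x)) (Real.exp (-μ * a) * (-μ)) a := by
            simpa using ((hasDerivAt_id a).const_mul (-μ)).exp
          have := this.const_mul (-(1/μ))
          convert this using 1
          · rfl
          · rfl
          · have h' : μ⁻¹ * μ = 1 := inv_mul_cancel₀ hμ.ne'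
            linear_combination (-Real.exp (-μ * a)) * h'
        rw [intervalIntegral.integral_eq_sub_of_hasDerivAt (fun a _ => h1 a)
          (hexpc.intervalIntegrable 0 t)]
        field_simp
        rw [mul_zero, neg_zero, Real.exp_zero]; ring
      rw [this]
      field_simp
    rw [hsplit, hold]
    linarith [hyoung, hcomp.le, hcomp.ge]
end

section
/- If ∫₀^{a*} u₀(a) da = 0, then ∫₀^∞ β(a)·u(t,a) da = 0 for all t ≥ 0, the solution is explicitly given by u(t,a) = exp(−μt)·u₀(a−t) if a ≥ t and u(t,a) = 0 if a < t, and consequently ‖u(t,·)‖_{L¹} ≤ exp(−μt)·‖u₀‖_{L¹} for all t ≥ 0, so that ‖u(t,·)‖_{L¹} → 0 exponentially as t → ∞. -/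
open MeasureTheory Filter


lemma aux_key (μ C : ℝ) (hμ : 0 < μ)
    (β : ℝ → ℝ) (hβmeas : Measurable β) (hβnonneg : ∀ a, 0 ≤ β a)
    (hβC : ∀ᵐ a ∂(volume.restrict (Set.Ioi 0)), β a ≤ C)
    (u₀ : ℝ → ℝ) (hu₀int : IntegrableOn u₀ (Set.Ioi 0)) (hu₀nonneg : ∀ a, 0 ≤ u₀ a)
    (hu₀zero :
      (∫ a in {a : ℝ | 0 < a ∧ 0 < ∫ σ in Set.Ioi a, β σ * Real.exp (-μ * σ)}, u₀ a) = 0) :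
    ∀ t, 0 ≤ t → (∀ᵐ a ∂volume, a ∈ Set.Ioi t → β a * u₀ (a - t) = 0) := by
  set g : ℝ → ℝ := fun a => ∫ σ in Set.Ioi a, β σ * Real.exp (-μ * σ) with hg
  set C' : ℝ := max C 0 with hC'
  have hβC' : ∀ᵐ a ∂(volume.restrict (Set.Ioi (0:ℝ))), β a ≤ C' :=
    hβC.mono fun a ha => ha.trans (le_max_left _ _)
  have hint : ∀ a : ℝ, 0 ≤ a → IntegrableOn (fun σ => β σ * Real.exp (-μ * σ)) (Set.Ioi a) := by
    intro a ha
    have hdom : IntegrableOn (fun σ => C' * Real.exp (-μ * σ)) (Set.Ioi a) :=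
      (exp_neg_integrableOn_Ioi a hμ).const_mul C'
    refine Integrable.mono' hdom
      ((hβmeas.mul (by fun_prop : Measurable fun σ : ℝ => Real.exp (-μ * σ))).aestronglyMeasurable) ?_
    have hsub : Set.Ioi a ⊆ Set.Ioi (0:ℝ) := Set.Ioi_subset_Ioi ha
    have := ae_restrict_of_ae_restrict_of_subset hsub hβC'
    filter_upwards [this] with σ hσ
    rw [Real.norm_eq_abs, abs_of_nonneg (mul_nonneg (hβnonneg σ) (Real.exp_pos _).le)]
    exact mul_le_mul_of_nonneg_right hσ (Real.exp_pos _).le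
  have hgnonneg : ∀ a, 0 ≤ g a := fun a =>
    setIntegral_nonneg measurableSet_Ioi fun σ _ =>
      mul_nonneg (hβnonneg σ) (Real.exp_pos _).le
  have hganti : ∀ a a' : ℝ, 0 ≤ a → a ≤ a' → g a' ≤ g a := by
    intro a a' ha haa'
    refine setIntegral_mono_set (hint a ha) ?_ (HasSubset.Subset.eventuallyLE (Set.Ioi_subset_Ioi haa'))
    refine (ae_restrict_iff' measurableSet_Ioi).mpr (ae_of_all _ fun σ _ => ?_)
    exact mul_nonneg (hβnonneg σ) (Real.exp_pos _).le
  have hu0S : u₀ =ᵐ[volume.restrict {a : ℝ | 0 < a ∧ 0 < g a}] 0 := by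
    have hintS : IntegrableOn u₀ {a : ℝ | 0 < a ∧ 0 < g a} :=
      hu₀int.mono_set fun a ha => ha.1
    exact (integral_eq_zero_iff_of_nonneg (fun a => hu₀nonneg a) hintS).mp hu₀zero
  by_cases hA : ∀ a : ℝ, 0 < a → 0 < g a
  · -- case A : u₀ = 0 a.e. on Ioi 0
    have hSeq : {a : ℝ | 0 < a ∧ 0 < g a} = Set.Ioi 0 :=
      Set.ext fun a => ⟨fun h => h.1, fun h => ⟨h, hA a h⟩⟩
    rw [hSeq] at hu0S
    have hu0' : ∀ᵐ s ∂volume, s ∈ Set.Ioi (0:ℝ) → u₀ s = 0 :=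
      (ae_restrict_iff' measurableSet_Ioi).mp hu0S
    intro t _
    have hpull : ∀ᵐ a ∂volume, (a - t) ∈ Set.Ioi (0:ℝ) → u₀ (a - t) = 0 :=
      (measurePreserving_sub_right volume t).quasiMeasurePreserving.tendsto_ae.eventually hu0'
    filter_upwards [hpull] with a ha hat
    rw [ha (by simp only [Set.mem_Ioi] at hat ⊢; linarith), mul_zero]
  · -- case B
    push_neg at hA
    obtain ⟨a₀, ha₀pos, ha₀⟩ := hA
    have ha₀0 : g a₀ = 0 := le_antisymm ha₀ (hgnonneg a₀)
    set Z : Set ℝ := {a | 0 < a ∧ g a = 0} with hZ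
    have hZne : Z.Nonempty := ⟨a₀, ha₀pos, ha₀0⟩
    have hZbdd : BddBelow Z := ⟨0, fun z hz => hz.1.le⟩
    set a₁ : ℝ := sInf Z with ha₁def
    have ha₁ : 0 ≤ a₁ := le_csInf hZne fun z hz => hz.1.le
    -- u₀ vanishes a.e. on (0, a₁)
    have hsubS : Set.Ioo 0 a₁ ⊆ {a : ℝ | 0 < a ∧ 0 < g a} := by
      intro s hs
      refine ⟨hs.1, ?_⟩
      rcases (hgnonneg s).lt_or_eq with h | h
      · exact h
      · exact absurd (csInf_le hZbdd ⟨hs.1, h.symm⟩) (not_le.mpr hs.2)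
    have hu0lt : u₀ =ᵐ[volume.restrict (Set.Ioo 0 a₁)] 0 :=
      hu0S.filter_mono (ae_mono (Measure.restrict_mono hsubS le_rfl))
    have hu0' : ∀ᵐ s ∂volume, s ∈ Set.Ioo (0:ℝ) a₁ → u₀ s = 0 :=
      (ae_restrict_iff' measurableSet_Ioo).mp hu0lt
    -- β vanishes a.e. on (a₁, ∞)
    have hβn : ∀ n : ℕ, ∀ᵐ σ ∂volume, σ ∈ Set.Ioi (a₁ + 1/(n+1:ℝ)) → β σ = 0 := by
      intro n
      have hca₁ : a₁ < a₁ + 1/(n+1:ℝ) := lt_add_of_pos_right _ (by positivity)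
      set c : ℝ := a₁ + 1/(n+1:ℝ) with hc
      have hcpos : 0 ≤ c := le_trans ha₁ hca₁.le
      have hgc : g c = 0 := by
        obtain ⟨z, hzZ, hzc⟩ := (csInf_lt_iff hZbdd hZne).mp hca₁
        exact le_antisymm ((hganti z c hzZ.1.le hzc.le).trans_eq hzZ.2) (hgnonneg c)
      have h0 : (fun σ => β σ * Real.exp (-μ * σ)) =ᵐ[volume.restrict (Set.Ioi c)] 0 :=
        (integral_eq_zero_iff_of_nonneg
          (fun σ => mul_nonneg (hβnonneg σ) (Real.exp_pos _).le) (hint c hcpos)).mp hgc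
      have h1 : ∀ᵐ σ ∂volume, σ ∈ Set.Ioi c → β σ * Real.exp (-μ * σ) = 0 :=
        (ae_restrict_iff' measurableSet_Ioi).mp h0
      filter_upwards [h1] with σ hσ hmem
      have := hσ hmem
      rcases mul_eq_zero.mp this with h | h
      · exact h
      · exact absurd h (Real.exp_ne_zero _)
    have hβ0 : ∀ᵐ σ ∂volume, σ ∈ Set.Ioi a₁ → β σ = 0 := by
      have hall : ∀ᵐ σ ∂volume, ∀ n : ℕ, σ ∈ Set.Ioi (a₁ + 1/(n+1:ℝ)) → β σ = 0 :=
        (ae_all_iff).mpr hβn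
      filter_upwards [hall] with σ hσ hmem
      obtain ⟨n, hn⟩ := exists_nat_one_div_lt (sub_pos.mpr (Set.mem_Ioi.mp hmem))
      exact hσ n (by simp only [Set.mem_Ioi]; linarith)
    intro t ht
    have hpull : ∀ᵐ a ∂volume, (a - t) ∈ Set.Ioo (0:ℝ) a₁ → u₀ (a - t) = 0 :=
      (measurePreserving_sub_right volume t).quasiMeasurePreserving.tendsto_ae.eventually hu0'
    have hne : ∀ᵐ a ∂volume, a ≠ a₁ + t := by
      have h : volume ({a₁ + t} : Set ℝ) = 0 := measure_singleton _
      rw [ae_iff]; simpa using h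
    filter_upwards [hβ0, hpull, hne] with a hβa hua hnea hat
    have hat' : t < a := Set.mem_Ioi.mp hat
    rcases lt_trichotomy (a - t) a₁ with h | h | h
    · rw [hua ⟨by linarith, h⟩, mul_zero]
    · exact absurd (by linarith : a = a₁ + t) hnea
    · rw [hβa (Set.mem_Ioi.mpr (by linarith)), zero_mul]


lemma aux_translate (f : ℝ → ℝ) (t : ℝ) :
    (∫ a in Set.Ioi t, f (a - t)) = ∫ a in Set.Ioi (0:ℝ), f a := by
  rw [← integral_indicator measurableSet_Ioi, ← integral_indicator measurableSet_Ioi]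
  have h : ∀ x : ℝ, (Set.Ioi t).indicator (fun a => f (a - t)) x
      = (Set.Ioi (0:ℝ)).indicator f (x - t) := by
    intro x
    by_cases hx : t < x
    · rw [Set.indicator_of_mem (Set.mem_Ioi.mpr hx),
        Set.indicator_of_mem (Set.mem_Ioi.mpr (by linarith))]
    · rw [Set.indicator_of_notMem (by simpa using hx),
        Set.indicator_of_notMem (by simp only [Set.mem_Ioi, not_lt]; linarith [not_lt.mp hx])]
  simp_rw [h]
  exact integral_sub_right_eq_self ((Set.Ioi (0:ℝ)).indicator f) t


lemma aux_volterra_zero (μ α C : ℝ) (hμ : 0 < μ) (hα : 0 < α) (hC : 0 ≤ C)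
    (β : ℝ → ℝ) (hβmeas : Measurable β) (hβnonneg : ∀ a, 0 ≤ β a)
    (hβC : ∀ᵐ a ∂(volume.restrict (Set.Ioi 0)), β a ≤ C)
    (b : ℝ → ℝ) (hbcont : ContinuousOn b (Set.Ici 0))
    (hb : ∀ t, 0 ≤ t → b t =
      α * ((∫ a in (0:ℝ)..t, β a * Real.exp (-μ*a) * b (t-a)) *
        Real.exp (-(∫ a in (0:ℝ)..t, β a * Real.exp (-μ*a) * b (t-a))))) :
    ∀ t, 0 ≤ t → b t = 0 := by
  intro T hT
  -- continuous extension of |b|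
  set B : ℝ → ℝ := fun s => |b (max s 0)| with hB
  have hBcont : Continuous B := by
    have h1 : Continuous fun s : ℝ => max s 0 := continuous_id.max continuous_const
    have h2 : ContinuousOn (fun s : ℝ => b (max s 0)) Set.univ :=
      hbcont.comp h1.continuousOn fun x _ => Set.mem_Ici.mpr (le_max_right _ _)
    exact ((continuousOn_univ.mp h2)).abs
  have hBb : ∀ s : ℝ, 0 ≤ s → B s = |b s| := by
    intro s hs; simp only [hB, max_eq_left hs]
  have hBnonneg : ∀ s, 0 ≤ B s := fun s => abs_nonneg _
  -- bound on [0, T]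
  obtain ⟨M, hM⟩ := (isCompact_Icc (a := (0:ℝ)) (b := T)).exists_bound_of_continuousOn
    hBcont.continuousOn
  have hM' : ∀ s ∈ Set.Icc 0 T, B s ≤ M := fun s hs => (le_abs_self _).trans (hM s hs)
  have hMnonneg : 0 ≤ M := le_trans (hBnonneg 0) (hM' 0 ⟨le_refl 0, hT⟩)
  set X : ℝ := C * M * T with hX
  set L : ℝ := α * Real.exp X * C with hL
  have hLnonneg : 0 ≤ L := by positivity
  set φ : ℝ → ℝ := fun t => ∫ s in (0:ℝ)..t, B s with hφ
  have hφderiv : ∀ t : ℝ, HasDerivAt φ (B t) t := fun t =>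
    (hBcont.integral_hasStrictDerivAt 0 t).hasDerivAt
  have hφnonneg : ∀ t, 0 ≤ t → 0 ≤ φ t := fun t ht =>
    intervalIntegral.integral_nonneg ht fun s _ => hBnonneg s
  -- key inequality
  have keybound : ∀ t ∈ Set.Icc (0:ℝ) T, |b t| ≤ L * φ t := by
    intro t ⟨ht0, htT⟩
    set x : ℝ := ∫ a in (0:ℝ)..t, β a * Real.exp (-μ*a) * b (t-a) with hx
    -- integrability over Ioc 0 t
    have hβC2 : ∀ᵐ a ∂(volume.restrict (Set.Ioc (0:ℝ) t)), β a ≤ C :=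
      ae_restrict_of_ae_restrict_of_subset Set.Ioc_subset_Ioi_self hβC
    have hmem2 : ∀ᵐ a ∂(volume.restrict (Set.Ioc (0:ℝ) t)), a ∈ Set.Ioc (0:ℝ) t :=
      ae_restrict_mem measurableSet_Ioc
    have hbd : ∀ᵐ a ∂(volume.restrict (Set.Ioc (0:ℝ) t)),
        ‖β a * Real.exp (-μ*a) * b (t-a)‖ ≤ C * M := by
      filter_upwards [hβC2, hmem2] with a hac ha
      have hexp : Real.exp (-μ*a) ≤ 1 := Real.exp_le_one_iff.mpr (by nlinarith [ha.1])
      have hbta : |b (t-a)| ≤ M := by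
        rw [← hBb (t-a) (by linarith [ha.2])]
        exact hM' (t-a) ⟨by linarith [ha.2], by linarith [ha.1]⟩
      rw [Real.norm_eq_abs, abs_mul, abs_mul,
        abs_of_nonneg (hβnonneg a), abs_of_nonneg (Real.exp_pos _).le]
      calc β a * Real.exp (-μ*a) * |b (t-a)| ≤ C * 1 * M := by
            apply mul_le_mul _ hbta (abs_nonneg _) (by positivity)
            exact mul_le_mul hac hexp (Real.exp_pos _).le hC
        _ = C * M := by ring
    have hmeas : AEStronglyMeasurable (fun a => β a * Real.exp (-μ*a) * b (t-a))
        (volume.restrict (Set.Ioc (0:ℝ) t)) := by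
      have m1 : AEStronglyMeasurable (fun a => β a * Real.exp (-μ*a))
          (volume.restrict (Set.Ioc (0:ℝ) t)) :=
        (hβmeas.mul (by fun_prop : Measurable fun a : ℝ => Real.exp (-μ*a))).aestronglyMeasurable
      have m2 : ContinuousOn (fun a : ℝ => b (t - a)) (Set.Ioc 0 t) := by
        refine hbcont.comp (continuous_const.sub continuous_id).continuousOn ?_
        intro a ha; simp only [Set.mem_Ici]; linarith [ha.2]
      exact m1.mul (m2.aestronglyMeasurable measurableSet_Ioc)
    have hIntOn : IntegrableOn (fun a => β a * Real.exp (-μ*a) * b (t-a)) (Set.Ioc 0 t) :=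
      ⟨hmeas, HasFiniteIntegral.restrict_of_bounded _ measure_Ioc_lt_top hbd⟩
    have hII : IntervalIntegrable (fun a => β a * Real.exp (-μ*a) * b (t-a)) volume 0 t :=
      (intervalIntegrable_iff_integrableOn_Ioc_of_le ht0).mpr hIntOn
    -- |x| ≤ C * φ t
    have step1 : |x| ≤ ∫ a in (0:ℝ)..t, |β a * Real.exp (-μ*a) * b (t-a)| :=
      intervalIntegral.abs_integral_le_integral_abs ht0
    have hRHScont : Continuous fun a : ℝ => C * B (t - a) :=
      continuous_const.mul (hBcont.comp (continuous_const.sub continuous_id))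
    have step2 : (∫ a in (0:ℝ)..t, |β a * Real.exp (-μ*a) * b (t-a)|)
        ≤ ∫ a in (0:ℝ)..t, C * B (t - a) := by
      apply intervalIntegral.integral_mono_ae_restrict ht0 hII.abs
        (hRHScont.intervalIntegrable 0 t)
      have hIccIoc : volume.restrict (Set.Icc (0:ℝ) t) = volume.restrict (Set.Ioc (0:ℝ) t) :=
        (Measure.restrict_congr_set Ioc_ae_eq_Icc).symm
      rw [hIccIoc]
      filter_upwards [hβC2, hmem2] with a hac ha
      have hexp : Real.exp (-μ*a) ≤ 1 := Real.exp_le_one_iff.mpr (by nlinarith [ha.1])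
      rw [abs_mul, abs_mul, abs_of_nonneg (hβnonneg a), abs_of_nonneg (Real.exp_pos _).le,
        ← hBb (t-a) (by linarith [ha.2])]
      calc β a * Real.exp (-μ*a) * B (t-a) ≤ C * 1 * B (t-a) := by
            apply mul_le_mul_of_nonneg_right _ (hBnonneg _)
            exact mul_le_mul hac hexp (Real.exp_pos _).le hC
        _ = C * B (t-a) := by ring
    have step3 : (∫ a in (0:ℝ)..t, C * B (t - a)) = C * φ t := by
      rw [intervalIntegral.integral_const_mul]
      congr 1
      have := intervalIntegral.integral_comp_sub_left (a := (0:ℝ)) (b := t) B t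
      simp [hφ]
    have hxφ : |x| ≤ C * φ t := by
      calc |x| ≤ _ := step1
        _ ≤ _ := step2
        _ = C * φ t := step3
    -- φ t ≤ M * T hence |x| ≤ X
    have hφle : φ t ≤ M * T := by
      have h1 : φ t ≤ ∫ s in (0:ℝ)..t, M := by
        apply intervalIntegral.integral_mono_on ht0
          (hBcont.intervalIntegrable 0 t) (intervalIntegrable_const)
        intro s hs; exact hM' s ⟨hs.1, hs.2.trans htT⟩
      rw [intervalIntegral.integral_const, smul_eq_mul, sub_zero] at h1
      exact h1.trans (by nlinarith)
    have hxX : |x| ≤ X := hxφ.trans (by rw [hX]; nlinarith)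
    have hexpx : Real.exp (-x) ≤ Real.exp X :=
      Real.exp_le_exp.mpr ((neg_le_abs x).trans hxX)
    -- conclude
    rw [hb t ht0, ← hx, abs_mul, abs_mul, abs_of_pos hα,
      abs_of_pos (Real.exp_pos (-x))]
    calc α * (|x| * Real.exp (-x)) ≤ α * ((C * φ t) * Real.exp X) := by
          apply mul_le_mul_of_nonneg_left _ hα.le
          exact mul_le_mul hxφ hexpx (Real.exp_pos _).le (mul_nonneg hC (hφnonneg t ht0))
      _ = L * φ t := by rw [hL]; ring
  -- Gronwall
  have hgron := norm_le_gronwallBound_of_norm_deriv_right_le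
    (f := φ) (f' := B) (δ := 0) (K := L) (ε := 0) (a := 0) (b := T)
    ((continuous_iff_continuousAt.mpr fun s => (hφderiv s).continuousAt).continuousOn)
    (fun x _ => (hφderiv x).hasDerivWithinAt)
    (by simp [hφ, intervalIntegral.integral_same])
    (fun x hx => by
      rw [Real.norm_eq_abs, Real.norm_eq_abs, abs_of_nonneg (hBnonneg x),
        abs_of_nonneg (hφnonneg x hx.1), add_zero]
      rw [hBb x hx.1]
      exact keybound x ⟨hx.1, hx.2.le⟩)
  have hφT : φ T = 0 := by
    have := hgron T ⟨hT, le_refl T⟩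
    rw [Real.norm_eq_abs, abs_of_nonneg (hφnonneg T hT)] at this
    have h0 : gronwallBound 0 L 0 (T - 0) = 0 := by simp [gronwallBound_ε0]
    linarith [hφnonneg T hT, h0 ▸ this]
  have := keybound T ⟨hT, le_refl T⟩
  rw [hφT, mul_zero] at this
  exact abs_eq_zero.mp (le_antisymm this (abs_nonneg _))

/-- Extinction on the boundary region: if `∫₀^{a*} u₀(a) da = 0`
then the birth term vanishes for all times, the solution is the pure transport
`u(t,a) = e^{-μt} u₀(a-t)` for `a ≥ t` and `u(t,a) = 0` for `a < t`, hence
`‖u(t,·)‖_{L¹} ≤ e^{-μt} ‖u₀‖_{L¹} → 0` exponentially.  Here, as the tail integral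
`a ↦ ∫_a^∞ β(σ) e^{-μσ} dσ` is nonincreasing, the interval `(0, a*)` coincides with
the set `{a > 0 : ∫_a^∞ β(σ) e^{-μσ} dσ > 0}`. -/
theorem gurtin_maccamy_boundary_extinction
    (μ α : ℝ) (hμ : 0 < μ) (hα : 0 < α)
    (f : ℝ → ℝ) (hf : ∀ x, f x = x * Real.exp (-x))
    (β : ℝ → ℝ) (hβmeas : Measurable β) (hβnonneg : ∀ a, 0 ≤ β a)
    (hβbdd : ∃ C : ℝ, ∀ᵐ a ∂(volume.restrict (Set.Ioi 0)), β a ≤ C)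
    (hβnorm : (∫ a in Set.Ioi (0:ℝ), β a * Real.exp (-μ * a)) = 1)
    (u₀ : ℝ → ℝ) (hu₀int : IntegrableOn u₀ (Set.Ioi 0))
    (hu₀nonneg : ∀ a, 0 ≤ u₀ a)
    (b : ℝ → ℝ) (hbcont : ContinuousOn b (Set.Ici 0))
    (hb : ∀ t, 0 ≤ t →
      b t = α * f (Real.exp (-μ * t) * (∫ a in Set.Ioi t, β a * u₀ (a - t))
        + ∫ a in (0:ℝ)..t, β a * Real.exp (-μ * a) * b (t - a)))
    (u : ℝ → ℝ → ℝ)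
    (hu : ∀ t a, u t a = if t ≤ a then Real.exp (-μ * t) * u₀ (a - t)
                         else Real.exp (-μ * a) * b (t - a))
    (hu₀zero :
      (∫ a in {a : ℝ | 0 < a ∧ 0 < ∫ σ in Set.Ioi a, β σ * Real.exp (-μ * σ)}, u₀ a)
        = 0) :
    (∀ t, 0 ≤ t → (∫ a in Set.Ioi (0:ℝ), β a * u t a) = 0) ∧
    (∀ t, 0 ≤ t → ∀ a, t ≤ a → u t a = Real.exp (-μ * t) * u₀ (a - t)) ∧
    (∀ t, 0 ≤ t → ∀ a, a < t → u t a = 0) ∧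
    (∀ t, 0 ≤ t →
      (∫ a in Set.Ioi (0:ℝ), |u t a|)
        ≤ Real.exp (-μ * t) * ∫ a in Set.Ioi (0:ℝ), |u₀ a|) ∧
    Tendsto (fun t => ∫ a in Set.Ioi (0:ℝ), |u t a|) atTop (nhds 0) := by
  obtain ⟨C, hβC⟩ := hβbdd
  set C' : ℝ := max C 0 with hC'
  have hC'nonneg : (0:ℝ) ≤ C' := le_max_right _ _
  have hβC' : ∀ᵐ a ∂(volume.restrict (Set.Ioi (0:ℝ))), β a ≤ C' :=
    hβC.mono fun a ha => ha.trans (le_max_left _ _)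
  have key := aux_key μ C' hμ β hβmeas hβnonneg hβC' u₀ hu₀int hu₀nonneg hu₀zero
  -- the renewal integral vanishes
  have hE : ∀ t, 0 ≤ t → (∫ a in Set.Ioi t, β a * u₀ (a - t)) = 0 := by
    intro t ht
    apply integral_eq_zero_of_ae
    exact (ae_restrict_iff' measurableSet_Ioi).mpr ((key t ht).mono fun a h ha => h ha)
  -- b satisfies the reduced equation
  have hb' : ∀ t, 0 ≤ t →
      b t = α * ((∫ a in (0:ℝ)..t, β a * Real.exp (-μ*a) * b (t-a)) *
        Real.exp (-(∫ a in (0:ℝ)..t, β a * Real.exp (-μ*a) * b (t-a)))) := by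
    intro t ht
    rw [hb t ht, hE t ht, mul_zero, zero_add, hf]
  have b0 : ∀ t, 0 ≤ t → b t = 0 :=
    aux_volterra_zero μ α C' hμ hα hC'nonneg β hβmeas hβnonneg hβC' b hbcont hb'
  have hne : ∀ t : ℝ, ∀ᵐ a : ℝ ∂volume, a ≠ t := by
    intro t
    have h : volume ({t} : Set ℝ) = 0 := measure_singleton t
    rw [ae_iff]; simpa using h
  -- conjunct 1
  have conj1 : ∀ t, 0 ≤ t → (∫ a in Set.Ioi (0:ℝ), β a * u t a) = 0 := by
    intro t ht
    apply integral_eq_zero_of_ae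
    refine (ae_restrict_iff' measurableSet_Ioi).mpr ?_
    filter_upwards [key t ht, hne t] with a hk hna ha
    simp only [Pi.zero_apply]
    rcases lt_or_gt_of_ne hna with h | h
    · rw [hu, if_neg (not_le.mpr h), b0 (t-a) (by linarith), mul_zero, mul_zero]
    · have hz := hk (Set.mem_Ioi.mpr h)
      rw [hu, if_pos h.le,
        show β a * (Real.exp (-μ*t) * u₀ (a-t)) = Real.exp (-μ*t) * (β a * u₀ (a-t)) by ring,
        hz, mul_zero]
  -- conjunct 4 (as an equality)
  have habs : ∀ t, 0 ≤ t → (∫ a in Set.Ioi (0:ℝ), |u t a|)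
      = Real.exp (-μ*t) * ∫ a in Set.Ioi (0:ℝ), |u₀ a| := by
    intro t ht
    have h1 : (fun a => |u t a|) =ᵐ[volume.restrict (Set.Ioi (0:ℝ))]
        (Set.Ioi t).indicator (fun a => Real.exp (-μ*t) * |u₀ (a - t)|) := by
      filter_upwards [ae_restrict_of_ae (hne t)] with a hna
      rcases lt_or_gt_of_ne hna with h | h
      · rw [hu, if_neg (not_le.mpr h), b0 (t-a) (by linarith), mul_zero, abs_zero,
          Set.indicator_of_notMem (by simpa using h.not_gt)]
      · rw [hu, if_pos h.le, Set.indicator_of_mem (Set.mem_Ioi.mpr h), abs_mul,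
          abs_of_pos (Real.exp_pos _)]
    rw [integral_congr_ae h1, setIntegral_indicator measurableSet_Ioi,
      Set.Ioi_inter_Ioi, max_eq_right ht, integral_const_mul,
      aux_translate (fun s => |u₀ s|) t]
  have hK : (0:ℝ) ≤ ∫ a in Set.Ioi (0:ℝ), |u₀ a| :=
    setIntegral_nonneg measurableSet_Ioi fun a _ => abs_nonneg _
  refine ⟨conj1, ?_, ?_, ?_, ?_⟩
  · intro t ht a hta; rw [hu, if_pos hta]
  · intro t ht a hat
    rw [hu, if_neg (not_le.mpr hat), b0 (t-a) (by linarith), mul_zero]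
  · intro t ht; exact le_of_eq (habs t ht)
  · have hexp : Tendsto (fun t : ℝ => Real.exp (-μ*t)) atTop (nhds 0) := by
      have h1 : Tendsto (fun t : ℝ => μ * t) atTop atTop :=
        Tendsto.const_mul_atTop hμ tendsto_id
      have h2 : Tendsto (fun t : ℝ => -(μ * t)) atTop atBot :=
        tendsto_neg_atBot_iff.mpr h1
      have h3 := Real.tendsto_exp_atBot.comp h2
      exact h3.congr fun t => by simp [Function.comp, neg_mul]
    have hmul : Tendsto (fun t : ℝ => Real.exp (-μ*t) * ∫ a in Set.Ioi (0:ℝ), |u₀ a|)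
        atTop (nhds 0) := by
      simpa using hexp.mul_const (∫ a in Set.Ioi (0:ℝ), |u₀ a|)
    apply hmul.congr'
    filter_upwards [eventually_ge_atTop (0:ℝ)] with t ht
    exact (habs t ht).symm
end

section
/- If ∫₀^{a*} u₀(a) da > 0, then there exists t₀ = t₀(u₀) > 0 such that ∫₀^∞ β(a)·u(t,a) da > 0 (equivalently b(t) > 0) for every t ≥ t₀. -/
set_option maxHeartbeats 1000000

open MeasureTheory Filter

open Set Metric Topology ENNReal
lemma exists_density_point {A : Set ℝ} (hA : MeasurableSet A) (hpos : 0 < volume A) :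
    ∃ x ∈ A, ∃ δ > 0, ∀ r, 0 < r → r ≤ δ →
      7/4 * r ≤ (volume (A ∩ Set.Icc (x - r) (x + r))).toReal := by
  have h := Besicovitch.ae_tendsto_measure_inter_div volume A
  have hmem : ∀ᵐ x ∂(volume.restrict A), x ∈ A := ae_restrict_mem hA
  have hne : (ae (volume.restrict A)).NeBot := by
    rw [ae_neBot]
    intro hc
    rw [← Measure.restrict_apply_univ A, hc] at hpos
    simp at hpos
  obtain ⟨x, hT, hxA⟩ := (h.and hmem).exists
  refine ⟨x, hxA, ?_⟩
  have h78 : (7/8 : ℝ≥0∞) < 1 := by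
    rw [ENNReal.div_lt_iff (by norm_num) (by norm_num)]
    · norm_num
  have hev : ∀ᶠ r in 𝓝[>] (0:ℝ),
      7/8 < volume (A ∩ closedBall x r) / volume (closedBall x r) :=
    hT.eventually (eventually_gt_nhds h78)
  rw [eventually_nhdsWithin_iff] at hev
  obtain ⟨δ, hδpos, hδ⟩ := Metric.eventually_nhds_iff.mp hev
  refine ⟨δ/2, by linarith, fun r hr hrδ => ?_⟩
  have h1 : 7/8 < volume (A ∩ closedBall x r) / volume (closedBall x r) := by
    apply hδ (y := r) _ hr
    rw [Real.dist_eq, sub_zero, abs_of_pos hr]; linarith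
  have hcb : volume (closedBall x r) = ENNReal.ofReal (2*r) := Real.volume_closedBall x r
  have hfin : volume (A ∩ closedBall x r) ≤ ENNReal.ofReal (2*r) := by
    rw [← hcb]; exact measure_mono inter_subset_right
  have h2 : (7/8 : ℝ≥0∞) * ENNReal.ofReal (2*r) < volume (A ∩ closedBall x r) := by
    rw [← hcb]
    rw [ENNReal.lt_div_iff_mul_lt (Or.inl ?_) (Or.inl ?_)] at h1
    · exact h1
    · rw [hcb]; simp [ENNReal.ofReal_eq_zero]; linarith
    · rw [hcb]; exact ENNReal.ofReal_ne_top
  have h3 : ENNReal.ofReal (7/4*r) = (7/8 : ℝ≥0∞) * ENNReal.ofReal (2*r) := by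
    rw [show (7:ℝ)/4*r = 7/8*(2*r) by ring, ENNReal.ofReal_mul (by norm_num),
      ENNReal.ofReal_div_of_pos (by norm_num)]
    norm_num
  rw [← Real.closedBall_eq_Icc]
  calc 7/4 * r = (ENNReal.ofReal (7/4*r)).toReal := by
        rw [ENNReal.toReal_ofReal]; positivity
    _ ≤ (volume (A ∩ closedBall x r)).toReal := by
        apply ENNReal.toReal_mono
        · exact ne_top_of_le_ne_top ENNReal.ofReal_ne_top hfin
        · rw [h3]; exact h2.le

lemma density_interval {A : Set ℝ} {x δ : ℝ}
    (H : ∀ r, 0 < r → r ≤ δ → 7/4 * r ≤ (volume (A ∩ Set.Icc (x - r) (x + r))).toReal)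
    {u v : ℝ} (huv : u < v) (h1 : x - 2*(v-u) ≤ u) (h2 : v ≤ x + 2*(v-u)) (h3 : v - u ≤ δ/2) :
    0 < volume (A ∩ Set.Ioo u v) := by
  by_contra hc
  push_neg at hc
  replace hc : volume (A ∩ Set.Ioo u v) = 0 := le_antisymm hc zero_le
  set L := v - u with hL
  have hLpos : 0 < L := by simp [hL]; linarith
  have hr := H (2*L) (by linarith) (by linarith)
  have hsub : A ∩ Icc (x - 2*L) (x + 2*L) ⊆ (A ∩ Ioo u v) ∪ (Icc (x-2*L) (x+2*L) \ Ioo u v) := by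
    intro y hy
    by_cases hyI : y ∈ Ioo u v
    · exact Or.inl ⟨hy.1, hyI⟩
    · exact Or.inr ⟨hy.2, hyI⟩
  have hmeas : volume (A ∩ Icc (x - 2*L) (x + 2*L)) ≤ ENNReal.ofReal (3*L) := by
    calc volume (A ∩ Icc (x - 2*L) (x + 2*L))
        ≤ volume (A ∩ Ioo u v) + volume (Icc (x-2*L) (x+2*L) \ Ioo u v) :=
          le_trans (measure_mono hsub) (measure_union_le _ _)
      _ = volume (Icc (x-2*L) (x+2*L) \ Ioo u v) := by rw [hc, zero_add]
      _ ≤ ENNReal.ofReal (3*L) := by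
          have hIoo : Ioo u v ⊆ Icc (x-2*L) (x+2*L) := fun y hy => ⟨by linarith [hy.1], by linarith [hy.2]⟩
          rw [measure_diff hIoo measurableSet_Ioo.nullMeasurableSet (by simp)]
          rw [Real.volume_Icc, Real.volume_Ioo]
          rw [← ENNReal.ofReal_sub _ (by linarith)]
          apply ENNReal.ofReal_le_ofReal
          linarith
  have := le_trans hr (ENNReal.toReal_mono ENNReal.ofReal_ne_top hmeas)
  rw [ENNReal.toReal_ofReal (by linarith)] at this
  linarith

lemma density_inter {A B : Set ℝ} (hB : MeasurableSet B) {x δ δ' : ℝ} (hδ : 0 < δ) (hδ' : 0 < δ')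
    (H : ∀ r, 0 < r → r ≤ δ → 7/4 * r ≤ (volume (A ∩ Set.Icc (x - r) (x + r))).toReal)
    (H' : ∀ r, 0 < r → r ≤ δ' → 7/4 * r ≤ (volume (B ∩ Set.Icc (x - r) (x + r))).toReal) :
    0 < volume (A ∩ B) := by
  by_contra hc
  push_neg at hc
  replace hc : volume (A ∩ B) = 0 := le_antisymm hc zero_le
  set r := min δ δ' with hr
  have hrpos : 0 < r := lt_min hδ hδ'
  have h1 := H r hrpos (min_le_left _ _)
  have h2 := H' r hrpos (min_le_right _ _)
  set I := Icc (x - r) (x + r) with hI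
  have hIvol : volume I = ENNReal.ofReal (2*r) := by rw [hI, Real.volume_Icc]; ring_nf
  have hsub : A ∩ I ⊆ (A ∩ B) ∪ (I \ (B ∩ I)) := by
    intro y hy
    by_cases hyB : y ∈ B
    · exact Or.inl ⟨hy.1, hyB⟩
    · exact Or.inr ⟨hy.2, fun hyc => hyB hyc.1⟩
  have hfinB : volume (B ∩ I) ≤ ENNReal.ofReal (2*r) := by
    rw [← hIvol]; exact measure_mono inter_subset_right
  have hfinB' : volume (B ∩ I) ≠ ⊤ := ne_top_of_le_ne_top ENNReal.ofReal_ne_top hfinB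
  have hkey : volume (A ∩ I) ≤ volume I - volume (B ∩ I) := by
    calc volume (A ∩ I) ≤ volume (A ∩ B) + volume (I \ (B ∩ I)) :=
          le_trans (measure_mono hsub) (measure_union_le _ _)
      _ = volume (I \ (B ∩ I)) := by rw [hc, zero_add]
      _ = volume I - volume (B ∩ I) :=
          measure_diff inter_subset_right (hB.inter measurableSet_Icc).nullMeasurableSet hfinB'
  have hIfin : volume I ≠ ⊤ := by rw [hIvol]; exact ENNReal.ofReal_ne_top
  have := ENNReal.toReal_mono (by exact ne_top_of_le_ne_top hIfin tsub_le_self) hkey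
  rw [ENNReal.toReal_sub_of_le (le_of_le_of_eq hfinB hIvol.symm) hIfin] at this
  have hItr : (volume I).toReal = 2*r := by rw [hIvol, ENNReal.toReal_ofReal (by linarith)]
  rw [hItr] at this
  linarith

-- generic positivity of a set integral
lemma my_setIntegral_pos {g : ℝ → ℝ} {s E : Set ℝ}
    (hnn : 0 ≤ᵐ[volume.restrict s] g) (hint : IntegrableOn g s)
    (hE : E ⊆ s) (hEpos : 0 < volume E) (hgE : ∀ x ∈ E, 0 < g x) :
    0 < ∫ x in s, g x := by
  rw [setIntegral_pos_iff_support_of_nonneg_ae hnn hint]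
  exact lt_of_lt_of_le hEpos (measure_mono (fun x hx => ⟨ne_of_gt (hgE x hx), hE hx⟩))

-- integrability of the tail integrand
lemma tail_integrable {μ : ℝ} (hμ : 0 < μ) {β : ℝ → ℝ} (hβmeas : Measurable β)
    (hβnonneg : ∀ a, 0 ≤ β a) {C : ℝ}
    (hC : ∀ᵐ a ∂(volume.restrict (Set.Ioi 0)), β a ≤ C) {c : ℝ} (hc : 0 ≤ c) :
    IntegrableOn (fun σ => β σ * Real.exp (-μ*σ)) (Set.Ioi c) := by
  apply Integrable.mono' ((exp_neg_integrableOn_Ioi c hμ).const_mul C)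
  · exact ((hβmeas.mul (by fun_prop)).aemeasurable.mono_measure
      (Measure.restrict_mono (Ioi_subset_Ioi hc) le_rfl)).aestronglyMeasurable
  · filter_upwards [ae_restrict_of_ae_restrict_of_subset (Ioi_subset_Ioi hc) hC] with a hCa
    rw [Real.norm_eq_abs, abs_of_nonneg (mul_nonneg (hβnonneg a) (Real.exp_pos _).le)]
    exact mul_le_mul_of_nonneg_right hCa (Real.exp_pos _).le

lemma conv_integrable {μ : ℝ} {β b : ℝ → ℝ} (hβmeas : Measurable β)
    (hβnonneg : ∀ a, 0 ≤ β a) {C : ℝ} (hC : ∀ᵐ a ∂(volume.restrict (Set.Ioi 0)), β a ≤ C)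
    (hbcont : ContinuousOn b (Set.Ici 0)) (hμ : 0 < μ) {t : ℝ} (ht : 0 ≤ t) :
    IntegrableOn (fun a => β a * Real.exp (-μ*a) * b (t-a)) (Set.Ioc 0 t) := by
  have hbm : ContinuousOn (fun a : ℝ => b (t - a)) (Set.Icc 0 t) := by
    apply hbcont.comp (continuous_const.sub continuous_id).continuousOn
    intro a ha
    simp only [mem_Ici]
    exact sub_nonneg.mpr ha.2
  obtain ⟨M, hM⟩ := isCompact_Icc.exists_bound_of_continuousOn hbm
  have hsub : Set.Ioc (0:ℝ) t ⊆ Set.Icc 0 t := Ioc_subset_Icc_self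
  have haem : AEMeasurable (fun a => β a * Real.exp (-μ*a) * b (t-a))
      (volume.restrict (Set.Ioc 0 t)) := by
    have h1 : AEMeasurable (fun a : ℝ => b (t - a)) (volume.restrict (Set.Ioc 0 t)) :=
      (hbm.aemeasurable measurableSet_Icc).mono_measure
        (Measure.restrict_mono hsub le_rfl)
    exact ((hβmeas.mul (by fun_prop)).aemeasurable.mul h1)
  have hbd : ∀ᵐ a ∂(volume.restrict (Set.Ioc 0 t)),
      ‖β a * Real.exp (-μ*a) * b (t-a)‖ ≤ C * M := by
    filter_upwards [ae_restrict_of_ae_restrict_of_subset Ioc_subset_Ioi_self hC,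
      ae_restrict_mem measurableSet_Ioc] with a hCa ha
    rw [norm_mul, norm_mul]
    have hb1 : ‖b (t-a)‖ ≤ M := hM _ (hsub ha)
    have he : ‖Real.exp (-μ*a)‖ ≤ 1 := by
      rw [Real.norm_eq_abs, abs_of_pos (Real.exp_pos _)]
      apply Real.exp_le_one_iff.mpr
      nlinarith [ha.1]
    have hβa : ‖β a‖ ≤ C := by rwa [Real.norm_eq_abs, abs_of_nonneg (hβnonneg a)]
    have h0C : (0:ℝ) ≤ C := le_trans (norm_nonneg _) hβa
    have h0M : (0:ℝ) ≤ M := le_trans (norm_nonneg _) hb1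
    calc ‖β a‖ * ‖Real.exp (-μ*a)‖ * ‖b (t-a)‖ ≤ C * 1 * M := by
          apply mul_le_mul _ hb1 (norm_nonneg _) (by positivity)
          exact mul_le_mul hβa he (norm_nonneg _) h0C
      _ = C * M := by ring
  apply Integrable.mono' (g := fun _ => C * M) _ haem.aestronglyMeasurable hbd
  exact integrableOn_const measure_Ioc_lt_top.ne

lemma trans_integrable {β u₀ : ℝ → ℝ} (hβmeas : Measurable β)
    (hβnonneg : ∀ a, 0 ≤ β a)
    {C : ℝ} (hC : ∀ᵐ a ∂(volume.restrict (Set.Ioi 0)), β a ≤ C)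
    (hu₀int : IntegrableOn u₀ (Set.Ioi 0)) (hu₀nonneg : ∀ a, 0 ≤ u₀ a)
    {t : ℝ} (ht : 0 ≤ t) :
    IntegrableOn (fun a => β a * u₀ (a - t)) (Set.Ioi t) := by
  have hind : Integrable ((Set.Ioi (0:ℝ)).indicator u₀) volume :=
    (integrable_indicator_iff measurableSet_Ioi).mpr hu₀int
  have hcomp : Integrable (fun a => (Set.Ioi (0:ℝ)).indicator u₀ (a - t)) volume :=
    hind.comp_sub_right t
  have heq : ∀ a ∈ Set.Ioi t, (Set.Ioi (0:ℝ)).indicator u₀ (a - t) = u₀ (a - t) := by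
    intro a ha
    rw [Set.indicator_of_mem]
    simp only [Set.mem_Ioi] at ha ⊢
    linarith
  have hu₀t : IntegrableOn (fun a => u₀ (a - t)) (Set.Ioi t) := by
    apply (hcomp.integrableOn (s := Set.Ioi t)).congr_fun heq measurableSet_Ioi
  apply Integrable.mono' (hu₀t.norm.const_mul C)
  · exact (hβmeas.aemeasurable.aestronglyMeasurable.mul hu₀t.aestronglyMeasurable)
  · filter_upwards [ae_restrict_of_ae_restrict_of_subset (Ioi_subset_Ioi ht) hC] with a hCa
    rw [norm_mul, Real.norm_eq_abs (β a), abs_of_nonneg (hβnonneg a)]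
    exact mul_le_mul_of_nonneg_right hCa (norm_nonneg _)

lemma b_nonneg {μ α : ℝ} (hμ : 0 < μ) (hα : 0 < α)
    {f : ℝ → ℝ} (hf : ∀ x, f x = x * Real.exp (-x))
    {β : ℝ → ℝ} (hβmeas : Measurable β) (hβnonneg : ∀ a, 0 ≤ β a)
    {C : ℝ} (hC : ∀ᵐ a ∂(volume.restrict (Set.Ioi 0)), β a ≤ C) (hC1 : 1 ≤ C)
    {u₀ : ℝ → ℝ} (hu₀nonneg : ∀ a, 0 ≤ u₀ a)
    {b : ℝ → ℝ} (hbcont : ContinuousOn b (Set.Ici 0))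
    (hbIoc : ∀ t, 0 ≤ t → b t = α * f (Real.exp (-μ*t) * (∫ a in Set.Ioi t, β a * u₀ (a-t))
      + ∫ a in Set.Ioc 0 t, β a * Real.exp (-μ*a) * b (t-a))) :
    ∀ t, 0 ≤ t → 0 ≤ b t := by
  have hfnn : ∀ x : ℝ, 0 ≤ x → 0 ≤ f x := by
    intro x hx; rw [hf]; positivity
  have hKnn : ∀ t : ℝ, 0 ≤ ∫ a in Set.Ioi t, β a * u₀ (a-t) := by
    intro t
    apply setIntegral_nonneg measurableSet_Ioi
    intro a _
    exact mul_nonneg (hβnonneg a) (hu₀nonneg _)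
  by_contra hcon
  push_neg at hcon
  obtain ⟨tbad, htbad0, htbadneg⟩ := hcon
  set N : Set ℝ := {t | 0 ≤ t ∧ b t < 0} with hN
  have hNne : N.Nonempty := ⟨tbad, htbad0, htbadneg⟩
  have hNbdd : BddBelow N := ⟨0, fun t ht => ht.1⟩
  set s := sInf N with hs
  have hs0 : 0 ≤ s := le_csInf hNne (fun t ht => ht.1)
  have hnn_lt : ∀ r, 0 ≤ r → r < s → 0 ≤ b r := by
    intro r hr0 hrs
    by_contra hc
    push_neg at hc
    exact absurd (csInf_le hNbdd ⟨hr0, hc⟩) (not_le.mpr hrs)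
  -- b s ≤ 0
  have hscl : s ∈ closure N := csInf_mem_closure hNne hNbdd
  have hbs_le : b s ≤ 0 := by
    have hcw : ContinuousWithinAt b N s :=
      (hbcont s hs0).mono (fun t ht => ht.1)
    have hne : (𝓝[N] s).NeBot := mem_closure_iff_nhdsWithin_neBot.mp hscl
    exact le_of_tendsto hcw (eventually_nhdsWithin_of_forall (fun t ht => (ht.2).le))
  -- X s ≥ 0 hence b s = 0
  have hconv_nn : ∀ t, 0 ≤ t → (∀ r, 0 ≤ r → r ≤ t → r ≠ t → 0 ≤ b r) →
      0 ≤ ∫ a in Set.Ioc 0 t, β a * Real.exp (-μ*a) * b (t-a) := by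
    intro t ht hbt
    apply setIntegral_nonneg measurableSet_Ioc
    intro a ha
    have : 0 ≤ b (t - a) := hbt _ (by linarith [ha.2]) (by linarith [ha.1]) (by intro hc; linarith [ha.1, sub_eq_self.mp hc])
    exact mul_nonneg (mul_nonneg (hβnonneg a) (Real.exp_pos _).le) this
  have hbs0 : b s = 0 := by
    refine le_antisymm hbs_le ?_
    rw [hbIoc s hs0]
    apply mul_nonneg hα.le
    apply hfnn
    have h1 := hKnn s
    have h2 := hconv_nn s hs0 (fun r hr0 hrs hrne => hnn_lt r hr0 (lt_of_le_of_ne hrs hrne))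
    positivity
  -- bound M on [s, s+1]
  have hIccsub : Set.Icc s (s+1) ⊆ Set.Ici 0 := fun r hr => le_trans hs0 hr.1
  obtain ⟨M, hM⟩ := isCompact_Icc.exists_bound_of_continuousOn (hbcont.mono hIccsub)
  have hM0 : 0 ≤ M := le_trans (norm_nonneg _) (hM s ⟨le_refl s, by linarith⟩)
  have hC0 : (0:ℝ) < C := by linarith
  -- choose h
  set h : ℝ := min (min 1 (1/(C*(M+1)))) (1/(2*α*Real.exp 1*C)) with hh
  have hhpos : 0 < h := by
    apply lt_min (lt_min one_pos _) <;> positivity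
  have hh1 : h ≤ 1 := le_trans (min_le_left _ _) (min_le_left _ _)
  have hhCM : C*(M+1)*h ≤ 1 := by
    have : h ≤ 1/(C*(M+1)) := le_trans (min_le_left _ _) (min_le_right _ _)
    rw [le_div_iff₀ (by positivity)] at this
    linarith
  have hhα : α*Real.exp 1*C*h ≤ 1/2 := by
    have h2 : h ≤ 1/(2*α*Real.exp 1*C) := min_le_right _ _
    rw [le_div_iff₀ (by positivity)] at h2
    linarith
  -- minimum on [s, s+h]
  have hIccsub2 : Set.Icc s (s+h) ⊆ Set.Ici 0 := fun r hr => le_trans hs0 hr.1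
  obtain ⟨tm, htm, hmin⟩ := isCompact_Icc.exists_isMinOn (nonempty_Icc.mpr (by linarith))
    (hbcont.mono hIccsub2)
  set m := b tm with hm
  have hmin' : ∀ r ∈ Set.Icc s (s+h), m ≤ b r := fun r hr => hmin hr
  have hmneg : m < 0 := by
    obtain ⟨t₂, ht₂N, ht₂lt⟩ := (csInf_lt_iff hNbdd hNne).mp (show s < s + h by linarith)
    have ht₂s : s ≤ t₂ := csInf_le hNbdd ht₂N
    exact lt_of_le_of_lt (hmin' t₂ ⟨ht₂s, ht₂lt.le⟩) ht₂N.2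
  have htm0 : 0 ≤ tm := le_trans hs0 htm.1
  have hmM : -M ≤ m := by
    have := hM tm ⟨htm.1, by linarith [htm.2]⟩
    rw [Real.norm_eq_abs, abs_le] at this
    exact this.1
  -- lower bound for the convolution at tm
  set ψ : ℝ → ℝ := (Set.Ioc 0 (tm - s)).indicator (fun _ => C * m) with hψ
  have hψint : Integrable ψ (volume.restrict (Set.Ioc 0 tm)) := by
    exact (integrableOn_const measure_Ioc_lt_top.ne).indicator measurableSet_Ioc
  have hconvint := conv_integrable hβmeas hβnonneg hC hbcont hμ htm0
  have hψle : ∀ᵐ a ∂(volume.restrict (Set.Ioc 0 tm)), ψ a ≤ β a * Real.exp (-μ*a) * b (tm-a) := by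
    filter_upwards [ae_restrict_of_ae_restrict_of_subset Ioc_subset_Ioi_self hC,
      ae_restrict_mem measurableSet_Ioc] with a hCa ha
    have hb1 : 0 ≤ β a * Real.exp (-μ*a) := mul_nonneg (hβnonneg a) (Real.exp_pos _).le
    have hb2 : β a * Real.exp (-μ*a) ≤ C := by
      calc β a * Real.exp (-μ*a) ≤ C * 1 := by
            apply mul_le_mul hCa _ (Real.exp_pos _).le (by positivity)
            apply Real.exp_le_one_iff.mpr
            nlinarith [ha.1]
        _ = C := mul_one C
    by_cases hcase : a ∈ Set.Ioc 0 (tm - s)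
    · rw [hψ, indicator_of_mem hcase]
      have htma : tm - a ∈ Set.Icc s (s+h) := by
        constructor
        · linarith [hcase.2]
        · linarith [hcase.1, htm.2]
      have hbm : m ≤ b (tm - a) := hmin' _ htma
      rcases le_or_gt 0 (b (tm - a)) with hbnn | hbneg
      · calc C * m ≤ 0 := mul_nonpos_of_nonneg_of_nonpos hC0.le hmneg.le
          _ ≤ β a * Real.exp (-μ*a) * b (tm-a) := mul_nonneg hb1 hbnn
      · calc C * m ≤ C * b (tm - a) := by nlinarith
          _ ≤ β a * Real.exp (-μ*a) * b (tm-a) := by nlinarith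
    · rw [hψ, indicator_of_notMem hcase]
      have : 0 ≤ b (tm - a) := by
        apply hnn_lt _ (by linarith [ha.2])
        simp only [Set.mem_Ioc, not_and_or, not_lt, not_le] at hcase
        rcases hcase with h1 | h2
        · linarith [ha.1]
        · linarith
      positivity
  have hψval : ∫ a in Set.Ioc 0 tm, ψ a = C * m * (tm - s) := by
    rw [hψ, setIntegral_indicator measurableSet_Ioc]
    rcases le_or_gt tm s with hts | hst
    · have h1 : tm = s := le_antisymm hts htm.1
      simp [h1]
    · rw [Set.inter_eq_self_of_subset_right (Ioc_subset_Ioc_right (by linarith [htm.1]))]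
      rw [setIntegral_const, measureReal_def, Real.volume_Ioc, smul_eq_mul]
      rw [ENNReal.toReal_ofReal (by linarith [htm.1])]
      ring
  have hconv_ge : C * m * (tm - s) ≤ ∫ a in Set.Ioc 0 tm, β a * Real.exp (-μ*a) * b (tm-a) := by
    rw [← hψval]
    exact integral_mono_ae hψint hconvint hψle
  -- conclude
  set X := Real.exp (-μ*tm) * (∫ a in Set.Ioi tm, β a * u₀ (a-tm))
      + ∫ a in Set.Ioc 0 tm, β a * Real.exp (-μ*a) * b (tm-a) with hX
  have hXge : C * m * h ≤ X := by
    have h1 : C * m * (tm - s) ≥ C * m * h := by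
      have h2 : tm - s ≤ h := by linarith [htm.2]
      exact mul_le_mul_of_nonpos_left h2 (by nlinarith)
    have h2 : 0 ≤ Real.exp (-μ*tm) * (∫ a in Set.Ioi tm, β a * u₀ (a-tm)) := by
      have := hKnn tm
      positivity
    rw [hX]
    linarith
  have hXm1 : -1 ≤ X := by
    have hstep : C*h*(-(M+1)) ≤ C*h*m :=
      mul_le_mul_of_nonneg_left (by linarith) (by positivity)
    nlinarith
  have hbtm : b tm = α * f X := hbIoc tm htm0
  rcases le_or_gt 0 X with hX0 | hXneg
  · have : 0 ≤ b tm := by rw [hbtm]; exact mul_nonneg hα.le (hfnn X hX0)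
    linarith
  · have hfX : X * Real.exp 1 ≤ f X := by
      rw [hf]
      have he : Real.exp (-X) ≤ Real.exp 1 := Real.exp_le_exp.mpr (by linarith)
      nlinarith
    have : m ≥ α * (X * Real.exp 1) := by
      rw [hm, hbtm]
      have := mul_le_mul_of_nonneg_left hfX hα.le
      linarith
    have hfin : α * (X * Real.exp 1) ≥ α * Real.exp 1 * (C * m * h) := by
      have h0 : (0:ℝ) < α * Real.exp 1 := by positivity
      nlinarith
    have : m ≥ (α * Real.exp 1 * C * h) * m := by nlinarith
    nlinarith

lemma initial_pos {μ α : ℝ} (hμ : 0 < μ) (hα : 0 < α)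
    {f : ℝ → ℝ} (hf : ∀ x, f x = x * Real.exp (-x))
    {β : ℝ → ℝ} (hβmeas : Measurable β) (hβnonneg : ∀ a, 0 ≤ β a)
    {C : ℝ} (hC : ∀ᵐ a ∂(volume.restrict (Set.Ioi 0)), β a ≤ C)
    {u₀ : ℝ → ℝ} (hu₀int : IntegrableOn u₀ (Set.Ioi 0)) (hu₀nonneg : ∀ a, 0 ≤ u₀ a)
    {b : ℝ → ℝ} (hbcont : ContinuousOn b (Set.Ici 0))
    (hbIoc : ∀ t, 0 ≤ t → b t = α * f (Real.exp (-μ*t) * (∫ a in Set.Ioi t, β a * u₀ (a-t))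
      + ∫ a in Set.Ioc 0 t, β a * Real.exp (-μ*a) * b (t-a)))
    (hbnn : ∀ t, 0 ≤ t → 0 ≤ b t)
    (hu₀pos :
      0 < ∫ a in {a : ℝ | 0 < a ∧ 0 < ∫ σ in Set.Ioi a, β σ * Real.exp (-μ * σ)}, u₀ a) :
    ∃ t₁ > (0:ℝ), 0 < b t₁ := by
  set S : Set ℝ := {a : ℝ | 0 < a ∧ 0 < ∫ σ in Set.Ioi a, β σ * Real.exp (-μ * σ)} with hS
  have hSsub : S ⊆ Set.Ioi 0 := fun a ha => ha.1
  -- measurability of S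
  have hTanti : Antitone (fun a : ℝ => ∫ σ in Set.Ioi (max a 0), β σ * Real.exp (-μ * σ)) := by
    intro a c hac
    apply setIntegral_mono_set (tail_integrable hμ hβmeas hβnonneg hC (le_max_right a 0))
    · exact Eventually.of_forall (fun σ => mul_nonneg (hβnonneg σ) (Real.exp_pos _).le)
    · exact HasSubset.Subset.eventuallyLE (Ioi_subset_Ioi (max_le_max hac le_rfl))
  have hSmeas : MeasurableSet S := by
    have : S = Set.Ioi 0 ∩ (fun a : ℝ => ∫ σ in Set.Ioi (max a 0), β σ * Real.exp (-μ * σ)) ⁻¹' (Set.Ioi 0) := by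
      ext a
      simp only [hS, Set.mem_setOf_eq, Set.mem_inter_iff, Set.mem_preimage, Set.mem_Ioi]
      constructor
      · rintro ⟨h1, h2⟩; exact ⟨h1, by rwa [max_eq_left h1.le]⟩
      · rintro ⟨h1, h2⟩; exact ⟨h1, by rwa [max_eq_left h1.le] at h2⟩
    rw [this]
    exact measurableSet_Ioi.inter (hTanti.measurable measurableSet_Ioi)
  -- measurable representative of u₀
  obtain ⟨w₀, hw₀sm, hw₀ae⟩ := hu₀int.aestronglyMeasurable
  have hw₀meas : Measurable w₀ := hw₀sm.measurable
  have hae : ∀ᵐ x, x ∈ Set.Ioi (0:ℝ) → u₀ x = w₀ x := (ae_restrict_iff' measurableSet_Ioi).mp hw₀ae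
  have hNu : volume {x : ℝ | ¬ (x ∈ Set.Ioi (0:ℝ) → u₀ x = w₀ x)} = 0 := ae_iff.mp hae
  -- positive measure of A
  set A : Set ℝ := {x | 0 < w₀ x} ∩ S with hA
  have hAmeas : MeasurableSet A := (measurableSet_lt measurable_const hw₀meas).inter hSmeas
  have hApos : 0 < volume A := by
    have hnn : 0 ≤ᵐ[volume.restrict S] u₀ := Eventually.of_forall (fun x => hu₀nonneg x)
    have hsupp := (setIntegral_pos_iff_support_of_nonneg_ae hnn (hu₀int.mono_set hSsub)).mp hu₀pos
    have hsub : (Function.support u₀ ∩ S) ⊆ A ∪ {x : ℝ | ¬ (x ∈ Set.Ioi (0:ℝ) → u₀ x = w₀ x)} := by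
      intro x hx
      by_cases hxw : u₀ x = w₀ x
      · left
        refine ⟨?_, hx.2⟩
        rw [Set.mem_setOf_eq, ← hxw]
        exact lt_of_le_of_ne (hu₀nonneg x) (Ne.symm hx.1)
      · right
        intro hcon
        exact hxw (hcon (hSsub hx.2))
    calc 0 < volume (Function.support u₀ ∩ S) := hsupp
      _ ≤ volume (A ∪ _) := measure_mono hsub
      _ ≤ volume A + volume {x : ℝ | ¬ (x ∈ Set.Ioi (0:ℝ) → u₀ x = w₀ x)} := measure_union_le _ _
      _ = volume A := by rw [hNu, add_zero]
  obtain ⟨σ₀, hσ₀A, δ₁, hδ₁, H₁⟩ := exists_density_point hAmeas hApos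
  -- positive measure of B₀
  set B₀ : Set ℝ := {x | 0 < β x} ∩ Set.Ioi σ₀ with hB₀
  have hB₀meas : MeasurableSet B₀ := (measurableSet_lt measurable_const hβmeas).inter measurableSet_Ioi
  have hB₀pos : 0 < volume B₀ := by
    by_contra hcon
    push_neg at hcon
    replace hcon : volume B₀ = 0 := le_antisymm hcon zero_le
    have hz : ∀ᵐ x ∂(volume.restrict (Set.Ioi σ₀)), β x * Real.exp (-μ * x) = 0 := by
      have h1 : ∀ᵐ x, x ∉ B₀ := by
        rw [ae_iff]
        simp only [not_not]
        exact hcon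
      filter_upwards [ae_restrict_of_ae h1,
        ae_restrict_mem measurableSet_Ioi] with x hx hmem
      have : ¬ (0 < β x) := fun hc => hx ⟨hc, hmem⟩
      rw [not_lt] at this
      have : β x = 0 := le_antisymm this (hβnonneg x)
      rw [this, zero_mul]
    have : ∫ σ in Set.Ioi σ₀, β σ * Real.exp (-μ * σ) = 0 := by
      rw [integral_congr_ae hz, integral_zero]
    have h2 := hσ₀A.2.2
    rw [this] at h2
    exact lt_irrefl 0 h2
  obtain ⟨s₀, hs₀B, δ₂, hδ₂, H₂⟩ := exists_density_point hB₀meas hB₀pos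
  set t₁ : ℝ := s₀ - σ₀ with ht₁def
  have ht₁ : 0 < t₁ := sub_pos.mpr hs₀B.2
  -- translated density estimate
  set Bt : Set ℝ := (fun x => x + t₁) ⁻¹' B₀ with hBt
  have hBtmeas : MeasurableSet Bt := hB₀meas.preimage (measurable_id.add_const t₁)
  have H₂' : ∀ r, 0 < r → r ≤ δ₂ →
      7/4 * r ≤ (volume (Bt ∩ Set.Icc (σ₀ - r) (σ₀ + r))).toReal := by
    intro r hr hrδ
    have hset : Bt ∩ Set.Icc (σ₀ - r) (σ₀ + r)
        = (fun x => x + t₁) ⁻¹' (B₀ ∩ Set.Icc (s₀ - r) (s₀ + r)) := by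
      ext x
      simp only [hBt, Set.mem_inter_iff, Set.mem_preimage, Set.mem_Icc]
      constructor
      · rintro ⟨h1, h2, h3⟩; exact ⟨h1, by linarith, by linarith⟩
      · rintro ⟨h1, h2, h3⟩; exact ⟨h1, by linarith, by linarith⟩
    rw [hset, measure_preimage_add_right]
    exact H₂ r hr hrδ
  have hABt : 0 < volume (A ∩ Bt) := density_inter hBtmeas hδ₁ hδ₂ H₁ H₂'
  -- positivity of the translated integral
  set G : ℝ → ℝ := fun σ => β (σ + t₁) * w₀ σ with hG
  have hGnn : 0 ≤ᵐ[volume.restrict (Set.Ioi 0)] G := by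
    filter_upwards [hw₀ae] with x hx
    rw [hG]
    dsimp only
    rw [← hx]
    exact mul_nonneg (hβnonneg _) (hu₀nonneg x)
  have hw₀int : IntegrableOn w₀ (Set.Ioi 0) := hu₀int.congr hw₀ae
  have hGmeas : AEStronglyMeasurable G (volume.restrict (Set.Ioi 0)) :=
    ((hβmeas.comp (measurable_id.add_const t₁)).mul hw₀meas).aestronglyMeasurable
  have hβtrans : ∀ᵐ x ∂(volume.restrict (Set.Ioi 0)), β (x + t₁) ≤ C := by
    have hE : volume {x : ℝ | ¬ (x ∈ Set.Ioi (0:ℝ) → β x ≤ C)} = 0 :=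
      ae_iff.mp ((ae_restrict_iff' measurableSet_Ioi).mp hC)
    have hEpre : volume ((fun x => x + t₁) ⁻¹' {x : ℝ | ¬ (x ∈ Set.Ioi (0:ℝ) → β x ≤ C)}) = 0 := by
      rw [measure_preimage_add_right]
      exact hE
    have h1 : ∀ᵐ x, (x + t₁ ∈ Set.Ioi (0:ℝ) → β (x + t₁) ≤ C) := by
      rw [ae_iff]
      exact hEpre
    filter_upwards [ae_restrict_of_ae h1,
      ae_restrict_mem measurableSet_Ioi] with x hx hmem
    exact hx (by simp only [Set.mem_Ioi] at hmem ⊢; linarith)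
  have hGint : IntegrableOn G (Set.Ioi 0) := by
    apply Integrable.mono' (hw₀int.norm.const_mul C) hGmeas
    filter_upwards [hβtrans, hw₀ae] with x hx hxw
    rw [hG]
    dsimp only
    rw [norm_mul, Real.norm_eq_abs (β (x+t₁)), abs_of_nonneg (hβnonneg _)]
    exact mul_le_mul_of_nonneg_right hx (norm_nonneg _)
  have hGpos : 0 < ∫ σ in Set.Ioi (0:ℝ), G σ := by
    apply my_setIntegral_pos hGnn hGint (fun x hx => hSsub (hx.1.2)) hABt
    intro x hx
    have h1 : 0 < w₀ x := hx.1.1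
    have h2 : 0 < β (x + t₁) := hx.2.1
    exact mul_pos h2 h1
  -- change of variables
  have hKeq : (∫ a in Set.Ioi t₁, β a * u₀ (a - t₁)) = ∫ σ in Set.Ioi (0:ℝ), β (σ + t₁) * u₀ σ := by
    rw [← integral_indicator (measurableSet_Ioi (a := t₁)), ← integral_indicator (measurableSet_Ioi (a := (0:ℝ)))]
    rw [← integral_add_right_eq_self (fun a => (Set.Ioi t₁).indicator (fun a => β a * u₀ (a - t₁)) a) t₁]
    congr 1
    funext σ
    by_cases hσ : 0 < σ
    · rw [Set.indicator_of_mem (by simp only [Set.mem_Ioi]; linarith),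
        Set.indicator_of_mem (by simpa using hσ), add_sub_cancel_right]
    · rw [Set.indicator_of_notMem (by simp only [Set.mem_Ioi]; intro hc; exact hσ (by linarith)),
        Set.indicator_of_notMem (by simpa using hσ)]
  have hKw : (∫ σ in Set.Ioi (0:ℝ), β (σ + t₁) * u₀ σ) = ∫ σ in Set.Ioi (0:ℝ), G σ := by
    apply integral_congr_ae
    filter_upwards [hw₀ae] with x hx
    rw [hG, hx]
  have hKpos : 0 < ∫ a in Set.Ioi t₁, β a * u₀ (a - t₁) := by
    rw [hKeq, hKw]; exact hGpos
  -- conclude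
  have hconv : 0 ≤ ∫ a in Set.Ioc 0 t₁, β a * Real.exp (-μ*a) * b (t₁ - a) := by
    apply setIntegral_nonneg measurableSet_Ioc
    intro a ha
    have : 0 ≤ b (t₁ - a) := hbnn _ (by linarith [ha.2])
    exact mul_nonneg (mul_nonneg (hβnonneg a) (Real.exp_pos _).le) this
  refine ⟨t₁, ht₁, ?_⟩
  rw [hbIoc t₁ ht₁.le]
  apply mul_pos hα
  rw [hf]
  have hX : 0 < Real.exp (-μ*t₁) * (∫ a in Set.Ioi t₁, β a * u₀ (a-t₁))
      + ∫ a in Set.Ioc 0 t₁, β a * Real.exp (-μ*a) * b (t₁-a) := by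
    have := mul_pos (Real.exp_pos (-μ*t₁)) hKpos
    linarith
  positivity

lemma grow {μ α : ℝ} (hμ : 0 < μ) (hα : 0 < α)
    {f : ℝ → ℝ} (hf : ∀ x, f x = x * Real.exp (-x))
    {β : ℝ → ℝ} (hβmeas : Measurable β) (hβnonneg : ∀ a, 0 ≤ β a)
    {C : ℝ} (hC : ∀ᵐ a ∂(volume.restrict (Set.Ioi 0)), β a ≤ C)
    {u₀ : ℝ → ℝ} (hu₀nonneg : ∀ a, 0 ≤ u₀ a)
    {b : ℝ → ℝ} (hbcont : ContinuousOn b (Set.Ici 0))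
    (hbIoc : ∀ t, 0 ≤ t → b t = α * f (Real.exp (-μ*t) * (∫ a in Set.Ioi t, β a * u₀ (a-t))
      + ∫ a in Set.Ioc 0 t, β a * Real.exp (-μ*a) * b (t-a)))
    (hbnn : ∀ t, 0 ≤ t → 0 ≤ b t)
    {s₁ δ : ℝ} (hδpos : 0 < δ) (hδs : δ < s₁)
    (H : ∀ r, 0 < r → r ≤ δ → 7/4 * r ≤ (volume ({x | 0 < β x} ∩ Set.Icc (s₁ - r) (s₁ + r))).toReal)
    {x y : ℝ} (hx : 0 < x) (hxy : x < y) (hby : ∀ t ∈ Set.Icc x y, 0 < b t) :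
    ∀ t ∈ Set.Icc (x + s₁ - min (y-x) δ / 4) (y + s₁ + min (y-x) δ / 4), 0 < b t := by
  set L : ℝ := min (y-x) δ / 4 with hLdef
  have hL : 0 < L := by
    apply div_pos (lt_min (by linarith) hδpos) (by norm_num)
  have hLδ : L ≤ δ/4 := by
    apply div_le_div_of_nonneg_right (min_le_right _ _) (by norm_num) |>.trans_eq rfl
  have hLyx : L ≤ (y-x)/4 := by
    apply div_le_div_of_nonneg_right (min_le_left _ _) (by norm_num) |>.trans_eq rfl
  intro t ht
  have hs₁pos : 0 < s₁ := lt_trans hδpos hδs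
  have ht0 : 0 < t := by
    have := ht.1
    have : x + s₁ - L ≤ t := ht.1
    nlinarith
  -- the subinterval
  set u : ℝ := max (t - y) (s₁ - 2*L) with hu
  set v : ℝ := u + L with hv
  have huv : u < v := by rw [hv]; linarith
  have hu0 : 0 ≤ u := by
    have : s₁ - 2*L ≤ u := le_max_right _ _
    nlinarith
  have hvtx : v ≤ t - x := by
    rw [hv, hu]
    rcases max_cases (t - y) (s₁ - 2*L) with ⟨hc, hc2⟩ | ⟨hc, hc2⟩ <;> rw [hc]
    · linarith [ht.2]
    · linarith [ht.1]
  have hdens : 0 < volume ({x | 0 < β x} ∩ Set.Ioo u v) := by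
    apply density_interval H huv
    · have h1 : v - u = L := by rw [hv]; ring
      rw [h1]
      have : s₁ - 2*L ≤ u := le_max_right _ _
      linarith
    · have h1 : v - u = L := by rw [hv]; ring
      rw [h1, hv, hu]
      rcases max_cases (t - y) (s₁ - 2*L) with ⟨hc, hc2⟩ | ⟨hc, hc2⟩ <;> rw [hc]
      · linarith [ht.2]
      · linarith
    · have h1 : v - u = L := by rw [hv]; ring
      rw [h1]; linarith
  -- positivity of the convolution term
  have hbnn' : ∀ a ∈ Set.Ioc 0 t, 0 ≤ β a * Real.exp (-μ*a) * b (t-a) := by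
    intro a ha
    have : 0 ≤ b (t - a) := hbnn _ (by linarith [ha.2])
    exact mul_nonneg (mul_nonneg (hβnonneg a) (Real.exp_pos _).le) this
  have hconvpos : 0 < ∫ a in Set.Ioc 0 t, β a * Real.exp (-μ*a) * b (t-a) := by
    apply my_setIntegral_pos ?_
      (conv_integrable hβmeas hβnonneg hC hbcont hμ ht0.le)
      (E := {x | 0 < β x} ∩ Set.Ioo u v) ?_ hdens ?_
    · filter_upwards [ae_restrict_mem measurableSet_Ioc] with a ha
      exact hbnn' a ha
    · intro a ha
      exact ⟨lt_of_le_of_lt hu0 ha.2.1, by linarith [ha.2.2, hvtx]⟩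
    · intro a ha
      have hba : 0 < b (t - a) := by
        apply hby
        constructor
        · have : a < v := ha.2.2
          linarith [hvtx]
        · have : u < a := ha.2.1
          have : t - y ≤ u := le_max_left _ _
          linarith [ha.2.1]
      exact mul_pos (mul_pos ha.1 (Real.exp_pos _)) hba
  -- conclude
  rw [hbIoc t ht0.le]
  apply mul_pos hα
  rw [hf]
  have hKnn : 0 ≤ ∫ a in Set.Ioi t, β a * u₀ (a-t) :=
    setIntegral_nonneg measurableSet_Ioi (fun a _ => mul_nonneg (hβnonneg a) (hu₀nonneg _))
  have hX : 0 < Real.exp (-μ*t) * (∫ a in Set.Ioi t, β a * u₀ (a-t))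
      + ∫ a in Set.Ioc 0 t, β a * Real.exp (-μ*a) * b (t-a) := by
    have h2 : 0 ≤ Real.exp (-μ*t) * (∫ a in Set.Ioi t, β a * u₀ (a-t)) :=
      mul_nonneg (Real.exp_pos _).le hKnn
    linarith
  positivity

lemma eventual_pos
    {b β : ℝ → ℝ} {s₁ δ : ℝ} (hδpos : 0 < δ) (hδs : δ < s₁)
    (grow' : ∀ {x y : ℝ}, 0 < x → x < y → (∀ t ∈ Set.Icc x y, 0 < b t) →
      ∀ t ∈ Set.Icc (x + s₁ - min (y-x) δ / 4) (y + s₁ + min (y-x) δ / 4), 0 < b t)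
    {x₀ y₀ : ℝ} (hx₀ : 0 < x₀) (hxy₀ : x₀ < y₀) (hby₀ : ∀ t ∈ Set.Icc x₀ y₀, 0 < b t) :
    ∃ t₀ > (0:ℝ), ∀ t, t₀ ≤ t → 0 < b t := by
  have hs₁pos : 0 < s₁ := lt_trans hδpos hδs
  set c : ℝ := min (y₀ - x₀) δ / 2 with hc
  have hcpos : 0 < c := div_pos (lt_min (by linarith) hδpos) (by norm_num)
  -- step 1 : lengthen
  have step1 : ∀ n : ℕ, ∃ x y, 0 < x ∧ x < y ∧ (y₀ - x₀) + n * c ≤ y - x ∧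
      (∀ t ∈ Set.Icc x y, 0 < b t) := by
    intro n
    induction n with
    | zero => exact ⟨x₀, y₀, hx₀, hxy₀, by simp, hby₀⟩
    | succ n ih =>
      obtain ⟨x, y, hx, hxy, hlen, hby⟩ := ih
      set L : ℝ := min (y-x) δ / 4 with hL
      have hLpos : 0 < L := div_pos (lt_min (by linarith) hδpos) (by norm_num)
      have hLδ : L ≤ δ/4 := by
        apply div_le_div_of_nonneg_right (min_le_right _ _) (by norm_num)
      refine ⟨x + s₁ - L, y + s₁ + L, by nlinarith, by nlinarith, ?_, grow' hx hxy hby⟩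
      have h2L : c ≤ 2*L := by
        rw [hc, hL]
        have : min (y₀-x₀) δ ≤ min (y-x) δ := by
          apply min_le_min _ le_rfl
          nlinarith [Nat.cast_nonneg (α := ℝ) n]
        linarith
      have : (n:ℝ) + 1 ≥ 0 := by positivity
      push_cast
      nlinarith [Nat.cast_nonneg (α := ℝ) n]
  -- step 2 : an interval of length ≥ s₁
  obtain ⟨N, hN⟩ := exists_nat_ge ((s₁ - (y₀ - x₀))/c)
  obtain ⟨X, Y, hX, hXY, hlen, hbXY⟩ := step1 N
  have hYX : s₁ ≤ Y - X := by
    rw [div_le_iff₀ hcpos] at hN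
    linarith
  -- step 3 : cover [X, ∞)
  have step3 : ∀ n : ℕ, ∀ t ∈ Set.Icc X (Y + n * s₁), 0 < b t := by
    intro n
    induction n with
    | zero => simpa using hbXY
    | succ n ih =>
      intro t ht
      rcases le_or_gt t (Y + n * s₁) with hcase | hcase
      · exact ih t ⟨ht.1, hcase⟩
      · have hXYn : X < Y + n * s₁ := by
          have : (0:ℝ) ≤ n * s₁ := by positivity
          linarith
        set L : ℝ := min (Y + n * s₁ - X) δ / 4 with hL
        have hLpos : 0 < L := div_pos (lt_min (by linarith) hδpos) (by norm_num)
        apply grow' hX hXYn ih t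
        constructor
        · have : X + s₁ ≤ Y + n * s₁ := by
            have : (0:ℝ) ≤ n * s₁ := by positivity
            linarith
          linarith
        · push_cast at ht
          linarith [ht.2]
  refine ⟨X, hX, fun t htX => ?_⟩
  obtain ⟨n, hn⟩ := exists_nat_ge ((t - Y)/s₁)
  apply step3 n t
  refine ⟨htX, ?_⟩
  rw [div_le_iff₀ hs₁pos] at hn
  linarith

lemma integral_split {μ : ℝ} (hμ : 0 < μ)
    {β u₀ b : ℝ → ℝ} (hβmeas : Measurable β) (hβnonneg : ∀ a, 0 ≤ β a)
    {C : ℝ} (hC : ∀ᵐ a ∂(volume.restrict (Set.Ioi 0)), β a ≤ C)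
    (hu₀int : IntegrableOn u₀ (Set.Ioi 0)) (hu₀nonneg : ∀ a, 0 ≤ u₀ a)
    (hbcont : ContinuousOn b (Set.Ici 0))
    {u : ℝ → ℝ → ℝ}
    (hu : ∀ t a, u t a = if t ≤ a then Real.exp (-μ * t) * u₀ (a - t)
                         else Real.exp (-μ * a) * b (t - a))
    {t : ℝ} (ht : 0 < t) :
    (∫ a in Set.Ioi (0:ℝ), β a * u t a)
      = Real.exp (-μ*t) * (∫ a in Set.Ioi t, β a * u₀ (a-t))
        + ∫ a in Set.Ioc 0 t, β a * Real.exp (-μ*a) * b (t-a) := by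
  have hae1 : (fun a => β a * Real.exp (-μ*a) * b (t-a))
      =ᵐ[volume.restrict (Set.Ioc 0 t)] (fun a => β a * u t a) := by
    have hne : ∀ᵐ a ∂volume.restrict (Set.Ioc 0 t), a ≠ t := by
      apply ae_restrict_of_ae
      rw [ae_iff]
      convert Real.volume_singleton (a := t) using 2
      ext a
      simp
    filter_upwards [hne, ae_restrict_mem measurableSet_Ioc] with a hat ha
    rw [hu t a, if_neg (by push_neg; exact lt_of_le_of_ne ha.2 hat)]
    ring
  have heq2 : ∀ a ∈ Set.Ioi t, β a * u t a = Real.exp (-μ*t) * (β a * u₀ (a-t)) := by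
    intro a ha
    rw [hu t a, if_pos (le_of_lt ha)]
    ring
  have hint1 : IntegrableOn (fun a => β a * u t a) (Set.Ioc 0 t) :=
    (conv_integrable hβmeas hβnonneg hC hbcont hμ ht.le).congr hae1
  have hint2 : IntegrableOn (fun a => β a * u t a) (Set.Ioi t) := by
    apply IntegrableOn.congr_fun _ (fun a ha => (heq2 a ha).symm) measurableSet_Ioi
    exact (trans_integrable hβmeas hβnonneg hC hu₀int hu₀nonneg ht.le).const_mul _
  rw [← Ioc_union_Ioi_eq_Ioi ht.le,
    setIntegral_union (Ioc_disjoint_Ioi le_rfl) measurableSet_Ioi hint1 hint2]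
  rw [add_comm]
  congr 1
  · rw [setIntegral_congr_fun measurableSet_Ioi heq2, integral_const_mul]
  · exact (integral_congr_ae hae1).symm

/-- Eventual positivity of the birth rate: if `∫₀^{a*} u₀(a) da > 0`
then there exists `t₀ = t₀(u₀) > 0` such that `∫₀^∞ β(a) u(t,a) da > 0`
(equivalently `b(t) > 0`) for all `t ≥ t₀`.  Here, as the tail integral
`a ↦ ∫_a^∞ β(σ) e^{-μσ} dσ` is nonincreasing, the interval `(0, a*)` coincides with
the set `{a > 0 : ∫_a^∞ β(σ) e^{-μσ} dσ > 0}`. -/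
theorem gurtin_maccamy_eventual_positivity
    (μ α : ℝ) (hμ : 0 < μ) (hα : 0 < α)
    (f : ℝ → ℝ) (hf : ∀ x, f x = x * Real.exp (-x))
    (β : ℝ → ℝ) (hβmeas : Measurable β) (hβnonneg : ∀ a, 0 ≤ β a)
    (hβbdd : ∃ C : ℝ, ∀ᵐ a ∂(volume.restrict (Set.Ioi 0)), β a ≤ C)
    (hβnorm : (∫ a in Set.Ioi (0:ℝ), β a * Real.exp (-μ * a)) = 1)
    (u₀ : ℝ → ℝ) (hu₀int : IntegrableOn u₀ (Set.Ioi 0))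
    (hu₀nonneg : ∀ a, 0 ≤ u₀ a)
    (b : ℝ → ℝ) (hbcont : ContinuousOn b (Set.Ici 0))
    (hb : ∀ t, 0 ≤ t →
      b t = α * f (Real.exp (-μ * t) * (∫ a in Set.Ioi t, β a * u₀ (a - t))
        + ∫ a in (0:ℝ)..t, β a * Real.exp (-μ * a) * b (t - a)))
    (u : ℝ → ℝ → ℝ)
    (hu : ∀ t a, u t a = if t ≤ a then Real.exp (-μ * t) * u₀ (a - t)
                         else Real.exp (-μ * a) * b (t - a))
    (hu₀pos :
      0 < ∫ a in {a : ℝ | 0 < a ∧ 0 < ∫ σ in Set.Ioi a, β σ * Real.exp (-μ * σ)}, u₀ a) :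
    ∃ t₀ > (0:ℝ), ∀ t, t₀ ≤ t →
      (0 < ∫ a in Set.Ioi (0:ℝ), β a * u t a) ∧ 0 < b t := by
  -- a bound on β that is at least 1
  obtain ⟨C₀, hC₀⟩ := hβbdd
  set C : ℝ := max C₀ 1 with hCdef
  have hC : ∀ᵐ a ∂(volume.restrict (Set.Ioi 0)), β a ≤ C := by
    filter_upwards [hC₀] with a ha
    exact le_trans ha (le_max_left _ _)
  have hC1 : (1:ℝ) ≤ C := le_max_right _ _
  -- rewrite the Volterra equation with a set integral
  have hbIoc : ∀ t, 0 ≤ t →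
      b t = α * f (Real.exp (-μ*t) * (∫ a in Set.Ioi t, β a * u₀ (a-t))
        + ∫ a in Set.Ioc 0 t, β a * Real.exp (-μ*a) * b (t-a)) := by
    intro t ht
    rw [hb t ht, intervalIntegral.integral_of_le ht]
  have hbnn : ∀ t, 0 ≤ t → 0 ≤ b t :=
    b_nonneg hμ hα hf hβmeas hβnonneg hC hC1 hu₀nonneg hbcont hbIoc
  -- first positive time
  obtain ⟨t₁, ht₁pos, hbt₁⟩ :=
    initial_pos hμ hα hf hβmeas hβnonneg hC hu₀int hu₀nonneg hbcont hbIoc hbnn hu₀pos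
  -- a closed interval around t₁ on which b is positive
  have hct₁ : ContinuousAt b t₁ :=
    ContinuousWithinAt.continuousAt (hbcont t₁ ht₁pos.le) (Ici_mem_nhds ht₁pos)
  have hev : ∀ᶠ s in 𝓝 t₁, 0 < b s := hct₁.eventually (eventually_gt_nhds hbt₁)
  obtain ⟨ε, hεpos, hball⟩ := Metric.eventually_nhds_iff.mp hev
  set x₀ : ℝ := t₁ - min (ε/2) (t₁/2) with hx₀def
  set y₀ : ℝ := t₁ + ε/2 with hy₀def
  have hx₀pos : 0 < x₀ := by
    have : min (ε/2) (t₁/2) ≤ t₁/2 := min_le_right _ _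
    rw [hx₀def]; linarith
  have hx₀y₀ : x₀ < y₀ := by
    have h1 : 0 < min (ε/2) (t₁/2) := lt_min (by linarith) (by linarith)
    rw [hx₀def, hy₀def]; linarith
  have hby₀ : ∀ t ∈ Set.Icc x₀ y₀, 0 < b t := by
    intro t htmem
    apply hball
    rw [Real.dist_eq, abs_lt]
    have h1 : min (ε/2) (t₁/2) ≤ ε/2 := min_le_left _ _
    constructor
    · have := htmem.1; rw [hx₀def] at this; linarith
    · have := htmem.2; rw [hy₀def] at this; linarith
  -- a density point of {β > 0}
  have hBβpos : 0 < volume ({x : ℝ | 0 < β x} ∩ Set.Ioi 0) := by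
    by_contra hcon
    push_neg at hcon
    replace hcon : volume ({x : ℝ | 0 < β x} ∩ Set.Ioi 0) = 0 := le_antisymm hcon zero_le
    have h1 : ∀ᵐ x, x ∉ ({x : ℝ | 0 < β x} ∩ Set.Ioi 0) := by
      rw [ae_iff]; simp only [not_not]; exact hcon
    have hz : ∀ᵐ x ∂(volume.restrict (Set.Ioi (0:ℝ))), β x * Real.exp (-μ * x) = 0 := by
      filter_upwards [ae_restrict_of_ae h1, ae_restrict_mem measurableSet_Ioi] with x hx hmem
      have : ¬ (0 < β x) := fun hc => hx ⟨hc, hmem⟩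
      rw [not_lt] at this
      rw [le_antisymm this (hβnonneg x), zero_mul]
    rw [integral_congr_ae hz, integral_zero] at hβnorm
    norm_num at hβnorm
  have hBβmeas : MeasurableSet ({x : ℝ | 0 < β x} ∩ Set.Ioi 0) :=
    (measurableSet_lt measurable_const hβmeas).inter measurableSet_Ioi
  obtain ⟨s₁, hs₁mem, δ', hδ'pos, H'⟩ := exists_density_point hBβmeas hBβpos
  have hs₁pos : 0 < s₁ := hs₁mem.2
  set δ : ℝ := min δ' (s₁/2) with hδdef
  have hδpos : 0 < δ := lt_min hδ'pos (by linarith)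
  have hδs : δ < s₁ := lt_of_le_of_lt (min_le_right _ _) (by linarith)
  have H : ∀ r, 0 < r → r ≤ δ →
      7/4 * r ≤ (volume ({x : ℝ | 0 < β x} ∩ Set.Icc (s₁ - r) (s₁ + r))).toReal := by
    intro r hr hrδ
    refine le_trans (H' r hr (le_trans hrδ (min_le_left _ _))) ?_
    apply ENNReal.toReal_mono
    · exact ne_top_of_le_ne_top (by rw [Real.volume_Icc]; exact ENNReal.ofReal_ne_top)
        (measure_mono inter_subset_right)
    · exact measure_mono (inter_subset_inter_left _ inter_subset_left)
  -- propagate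
  obtain ⟨t₀, ht₀pos, ht₀⟩ := eventual_pos (β := β) hδpos hδs
    (fun {x y} hx hxy hby => grow hμ hα hf hβmeas hβnonneg hC hu₀nonneg hbcont hbIoc hbnn
      hδpos hδs H hx hxy hby) hx₀pos hx₀y₀ hby₀
  refine ⟨t₀, ht₀pos, fun t htt => ?_⟩
  have hbt : 0 < b t := ht₀ t htt
  have ht0 : 0 < t := lt_of_lt_of_le ht₀pos htt
  refine ⟨?_, hbt⟩
  rw [integral_split hμ hβmeas hβnonneg hC hu₀int hu₀nonneg hbcont hu ht0]
  -- positivity of the argument of f from positivity of b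
  set X : ℝ := Real.exp (-μ*t) * (∫ a in Set.Ioi t, β a * u₀ (a-t))
      + ∫ a in Set.Ioc 0 t, β a * Real.exp (-μ*a) * b (t-a) with hXdef
  have hbfX : b t = α * f X := hbIoc t ht0.le
  have hfX : 0 < f X := by
    rw [hbfX] at hbt
    by_contra hcon
    push_neg at hcon
    nlinarith
  by_contra hcon
  push_neg at hcon
  have : f X ≤ 0 := by
    rw [hf]
    exact mul_nonpos_of_nonpos_of_nonneg hcon (Real.exp_pos _).le
  linarith
end

section
/- Assume 1 < α ≤ e². Then for every u ≥ 0 one has |α·u·exp(−u) − ln α| ≤ |u − ln α|, and the inequality is strict whenever u ≠ 0 and u ≠ ln α. -/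
/-- Core inequality: for `t > 0`, `2(e^t - 1) < t(e^t + 1)`. -/
lemma fisher_goh_core (t : ℝ) (ht : 0 < t) :
    2 * (Real.exp t - 1) < t * (Real.exp t + 1) := by
  have key : StrictMonoOn (fun s : ℝ => s * (Real.exp s + 1) - 2 * (Real.exp s - 1))
      (Set.Ici 0) := by
    apply strictMonoOn_of_deriv_pos (convex_Ici 0)
    · exact Continuous.continuousOn (by continuity)
    · intro x hx
      rw [interior_Ici] at hx
      have hx0 : (0:ℝ) < x := hx
      have he := Real.hasDerivAt_exp x
      have hd : HasDerivAt (fun s : ℝ => s * (Real.exp s + 1) - 2 * (Real.exp s - 1))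
          (1 * (Real.exp x + 1) + x * Real.exp x - 2 * Real.exp x) x := by
        exact ((hasDerivAt_id x).mul (he.add_const 1)).sub ((he.sub_const 1).const_mul 2)
      rw [hd.deriv]
      have h2 : 1 - x < Real.exp (-x) := by
        have := Real.add_one_lt_exp (neg_ne_zero.mpr (ne_of_gt hx0))
        linarith
      have h3 : Real.exp (-x) * Real.exp x = 1 := by
        rw [← Real.exp_add]; simp
      nlinarith [mul_lt_mul_of_pos_right h2 (Real.exp_pos x), Real.exp_pos x]
  have h0 : (0:ℝ) ∈ Set.Ici (0:ℝ) := Set.self_mem_Ici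
  have htm : t ∈ Set.Ici (0:ℝ) := le_of_lt ht
  have := key h0 htm ht
  simp only [Real.exp_zero] at this
  linarith

/-- (Fisher–Goh inequality.) If `1 < α ≤ e²`, then for every
`u ≥ 0` one has `|α u e^{-u} - ln α| ≤ |u - ln α|`, with strict inequality whenever
`u ≠ 0` and `u ≠ ln α`. -/
theorem fisher_goh_inequality
    (α : ℝ) (hα1 : 1 < α) (hα2 : α ≤ Real.exp 2) :
    ∀ u : ℝ, 0 ≤ u →
      |α * (u * Real.exp (-u)) - Real.log α| ≤ |u - Real.log α| ∧
      (u ≠ 0 → u ≠ Real.log α →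
        |α * (u * Real.exp (-u)) - Real.log α| < |u - Real.log α|) := by
  intro u hu
  have hα0 : (0:ℝ) < α := lt_trans one_pos hα1
  set L := Real.log α with hLdef
  have hL0 : 0 < L := Real.log_pos hα1
  have hL2 : L ≤ 2 := by
    calc L ≤ Real.log (Real.exp 2) := Real.log_le_log hα0 hα2
    _ = 2 := Real.log_exp 2
  have hg : α * (u * Real.exp (-u)) = u * Real.exp (L - u) := by
    have h1 : Real.exp (L - u) = Real.exp L * Real.exp (-u) := by
      rw [← Real.exp_add]; ring_nf
    rw [h1, ← Real.exp_log hα0]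
    ring
  rw [hg]
  rcases lt_trichotomy u L with h | h | h
  · -- u < L
    set t := L - u with htdef
    have ht : 0 < t := by rw [htdef]; linarith
    have hcore := fisher_goh_core t ht
    have hexp1 : 1 < Real.exp t := by
      have := Real.add_one_lt_exp (ne_of_gt ht); linarith
    have habs : |u - L| = t := by
      rw [abs_of_neg (by linarith : u - L < 0), htdef]; ring
    have hub : u * Real.exp t - L < t := by
      have hueq : u = L - t := by rw [htdef]; ring
      nlinarith [hexp1, hcore, hL2]
    have hlb : L - u * Real.exp t ≤ t := by nlinarith [hexp1, hu]
    rw [habs]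
    constructor
    · exact abs_le.mpr ⟨by linarith, by linarith⟩
    · intro hu0 _
      have hu0' : 0 < u := lt_of_le_of_ne hu (Ne.symm hu0)
      have hlb' : L - u * Real.exp t < t := by nlinarith [hexp1, hu0']
      exact abs_lt.mpr ⟨by linarith, by linarith⟩
  · -- u = L
    rw [h]
    simp only [sub_self, Real.exp_zero, mul_one]
    constructor
    · simp
    · intro _ hne
      exact absurd rfl hne
  · -- L < u
    set t := u - L with htdef
    have ht : 0 < t := by rw [htdef]; linarith
    have hcore := fisher_goh_core t ht
    have hexp1 : 1 < Real.exp t := by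
      have := Real.add_one_lt_exp (ne_of_gt ht); linarith
    have hinv : Real.exp (-t) * Real.exp t = 1 := by rw [← Real.exp_add]; simp
    have hexppos := Real.exp_pos (-t)
    have habs : |u - L| = t := by rw [abs_of_pos (by linarith : (0:ℝ) < u - L), htdef]
    have hLu : L - u = -t := by rw [htdef]; ring
    rw [hLu, habs]
    have hu0 : 0 < u := lt_trans hL0 h
    have hexplt : Real.exp (-t) < 1 := by nlinarith
    have hub : u * Real.exp (-t) - L < t := by nlinarith
    have hlb : -t < u * Real.exp (-t) - L := by
      have hkey : (L - t) * Real.exp t < L + t := by nlinarith [hexp1, hL2]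
      have := mul_lt_mul_of_pos_right hkey hexppos
      have hueq : u = L + t := by rw [htdef]; ring
      nlinarith [this, hinv]
    constructor
    · exact abs_le.mpr ⟨by linarith, by linarith⟩
    · intro _ _
      exact abs_lt.mpr ⟨hlb, hub⟩
end

section
/- Assume 1 < α ≤ e² and let b : ℝ → [0,∞) be a continuous function satisfying the renewal equation b(t) = α·f( ∫₀^∞ β(a)·exp(−μa)·b(t−a) da ) for all t ∈ ℝ. Then, with g(x) = (x−1)², for every t ∈ ℝ one has g( b(t)/ln α ) ≤ ∫₀^∞ β(a)·exp(−μa)·g( b(t−a)/ln α ) da. -/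
open MeasureTheory Filter

/-- Key scalar contraction property of the Ricker-type map `x ↦ x e^{L-x}` for `0 < L ≤ 2`. -/
lemma ricker_contract {L x : ℝ} (hL2 : L ≤ 2) (hx : 0 ≤ x) :
    (x * Real.exp (L - x) - L) ^ 2 ≤ (x - L) ^ 2 := by
  have hψ : Monotone (fun y : ℝ => y * Real.exp (L - y) + y) := by
    have hdiff : Differentiable ℝ (fun y : ℝ => y * Real.exp (L - y) + y) := by
      apply Differentiable.add _ differentiable_id
      exact differentiable_id.mul (Real.differentiable_exp.comp
        ((differentiable_const L).sub differentiable_id))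
    apply monotone_of_deriv_nonneg hdiff
    intro y
    have hd : HasDerivAt (fun y : ℝ => y * Real.exp (L - y) + y)
        (1 * Real.exp (L - y) + y * (Real.exp (L - y) * (0 - 1)) + 1) y := by
      exact ((hasDerivAt_id y).mul
        (((Real.hasDerivAt_exp (L - y)).comp y
          ((hasDerivAt_const y L).sub (hasDerivAt_id y))))).add (hasDerivAt_id y)
    rw [hd.deriv]
    have hE : Real.exp (L - y) * Real.exp (y - L) = 1 := by
      rw [← Real.exp_add]; simp
    have h1 : y - 1 ≤ Real.exp (y - L) := by
      have := Real.add_one_le_exp (y - L); linarith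
    have hEp := Real.exp_pos (L - y)
    nlinarith [mul_le_mul_of_nonneg_right h1 hEp.le]
  rcases le_total x L with h | h
  · have h1 : x * Real.exp (L - x) + x ≤ 2 * L := by
      have := hψ h; simp at this; linarith
    have h2 : x ≤ x * Real.exp (L - x) := by
      have : (1:ℝ) ≤ Real.exp (L - x) := Real.one_le_exp (by linarith)
      nlinarith
    nlinarith [mul_nonneg (sub_nonneg.2 h2) (sub_nonneg.2 h1)]
  · have h1 : 2 * L ≤ x * Real.exp (L - x) + x := by
      have := hψ h; simp at this; linarith
    have h2 : x * Real.exp (L - x) ≤ x := by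
      have : Real.exp (L - x) ≤ 1 := Real.exp_le_one_iff.2 (by linarith)
      nlinarith
    nlinarith [mul_nonneg (sub_nonneg.2 h2) (sub_nonneg.2 h1)]

/-- Integrability of `β(a) e^{-μa} φ(a)` on `(0,∞)` for bounded `β, φ`. -/
lemma integrable_weighted {μ C B : ℝ} (hμ : 0 < μ) (hC : 0 ≤ C) (hB : 0 ≤ B)
    {β φ : ℝ → ℝ} (hβm : Measurable β) (hβ0 : ∀ a, 0 ≤ β a)
    (hβC : ∀ᵐ a ∂(volume.restrict (Set.Ioi 0)), β a ≤ C)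
    (hφm : Measurable φ) (hφB : ∀ a, |φ a| ≤ B) :
    IntegrableOn (fun a => β a * Real.exp (-μ * a) * φ a) (Set.Ioi 0) := by
  have hdom : IntegrableOn (fun a => C * B * Real.exp (-μ * a)) (Set.Ioi 0) :=
    (exp_neg_integrableOn_Ioi 0 hμ).const_mul (C * B)
  have hmeas : AEStronglyMeasurable (fun a => β a * Real.exp (-μ * a) * φ a)
      (volume.restrict (Set.Ioi 0)) := by
    apply Measurable.aestronglyMeasurable
    exact (hβm.mul ((Real.continuous_exp.comp (continuous_const.mul continuous_id)).measurable)).mul hφm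
  apply Integrable.mono' hdom hmeas
  filter_upwards [hβC] with a hc
  have hexp := Real.exp_pos (-μ * a)
  rw [Real.norm_eq_abs, abs_mul, abs_mul, abs_of_nonneg (hβ0 a), abs_of_pos hexp]
  calc β a * Real.exp (-μ * a) * |φ a|
      ≤ C * Real.exp (-μ * a) * B :=
        mul_le_mul (mul_le_mul_of_nonneg_right hc hexp.le) (hφB a) (abs_nonneg _) (by positivity)
    _ = C * B * Real.exp (-μ * a) := by ring

/-- Key Lyapunov inequality along a complete orbit: if `1 < α ≤ e²`
and `b ≥ 0` satisfies the renewal equation, then with `g(x) = (x-1)²`,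
`g(b(t)/ln α) ≤ ∫₀^∞ β(a) e^{-μa} g(b(t-a)/ln α) da` for all `t ∈ ℝ`. -/
theorem gurtin_maccamy_lyapunov_inequality
    (μ α : ℝ) (hμ : 0 < μ) (hα1 : 1 < α) (hα2 : α ≤ Real.exp 2)
    (f : ℝ → ℝ) (hf : ∀ x, f x = x * Real.exp (-x))
    (β : ℝ → ℝ) (hβmeas : Measurable β) (hβnonneg : ∀ a, 0 ≤ β a)
    (hβbdd : ∃ C : ℝ, ∀ᵐ a ∂(volume.restrict (Set.Ioi 0)), β a ≤ C)
    (hβnorm : (∫ a in Set.Ioi (0:ℝ), β a * Real.exp (-μ * a)) = 1)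
    (b : ℝ → ℝ) (hbcont : Continuous b) (hbnonneg : ∀ t, 0 ≤ b t)
    (hrenewal : ∀ t : ℝ,
      b t = α * f (∫ a in Set.Ioi (0:ℝ), β a * Real.exp (-μ * a) * b (t - a)))
    (g : ℝ → ℝ) (hg : ∀ x, g x = (x - 1) ^ 2) :
    ∀ t : ℝ,
      g (b t / Real.log α)
        ≤ ∫ a in Set.Ioi (0:ℝ), β a * Real.exp (-μ * a) * g (b (t - a) / Real.log α) := by
  intro t
  set L : ℝ := Real.log α with hLdef
  have hα0 : (0:ℝ) < α := lt_trans one_pos hα1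
  have hL : 0 < L := Real.log_pos hα1
  have hL2 : L ≤ 2 := by
    have := Real.log_le_log hα0 hα2
    rwa [Real.log_exp] at this
  have hαL : α = Real.exp L := (Real.exp_log hα0).symm
  obtain ⟨C₀, hC₀⟩ := hβbdd
  set C : ℝ := max C₀ 0 with hCdef
  have hC : 0 ≤ C := le_max_right _ _
  have hβC : ∀ᵐ a ∂(volume.restrict (Set.Ioi 0)), β a ≤ C := by
    filter_upwards [hC₀] with a ha; exact le_trans ha (le_max_left _ _)
  -- nonnegativity of the moment integrals
  have hInonneg : ∀ s : ℝ, 0 ≤ ∫ a in Set.Ioi (0:ℝ), β a * Real.exp (-μ * a) * b (s - a) := by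
    intro s
    apply setIntegral_nonneg measurableSet_Ioi
    intro a _
    exact mul_nonneg (mul_nonneg (hβnonneg a) (Real.exp_pos _).le) (hbnonneg _)
  -- boundedness of b
  have hbB : ∀ s, |b s| ≤ α := by
    intro s
    rw [abs_of_nonneg (hbnonneg s), hrenewal s, hf]
    set I := ∫ a in Set.Ioi (0:ℝ), β a * Real.exp (-μ * a) * b (s - a)
    have hI0 : 0 ≤ I := hInonneg s
    have h1 : I * Real.exp (-I) ≤ 1 := by
      have h2 : I ≤ Real.exp I := by have := Real.add_one_le_exp I; linarith
      have h3 : Real.exp I * Real.exp (-I) = 1 := by rw [← Real.exp_add]; simp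
      nlinarith [Real.exp_pos (-I)]
    nlinarith
  -- abbreviations
  set I : ℝ := ∫ a in Set.Ioi (0:ℝ), β a * Real.exp (-μ * a) * b (t - a) with hIdef
  have hI0 : 0 ≤ I := hInonneg t
  set m : ℝ := I / L with hmdef
  set K1 : ℝ := (m - 1) ^ 2 - 2 * (m - 1) * m with hK1def
  set K2 : ℝ := 2 * (m - 1) / L with hK2def
  -- integrability facts
  have hw_int : IntegrableOn (fun a => β a * Real.exp (-μ * a)) (Set.Ioi 0) := by
    have := integrable_weighted hμ hC zero_le_one hβmeas hβnonneg hβC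
      (measurable_const : Measurable (fun _ : ℝ => (1:ℝ)))
      (fun a => by rw [abs_one])
    simpa using this
  have hwb_int : IntegrableOn (fun a => β a * Real.exp (-μ * a) * b (t - a)) (Set.Ioi 0) := by
    exact integrable_weighted hμ hC hα0.le hβmeas hβnonneg hβC
      ((hbcont.comp (continuous_const.sub continuous_id)).measurable)
      (fun a => hbB (t - a))
  have hwg_int : IntegrableOn
      (fun a => β a * Real.exp (-μ * a) * g (b (t - a) / L)) (Set.Ioi 0) := by
    apply integrable_weighted hμ hC (B := (α / L + 1) ^ 2) (by positivity) hβmeas hβnonneg hβC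
    · have : Continuous (fun a : ℝ => g (b (t - a) / L)) := by
        have : Continuous (fun a : ℝ => (b (t - a) / L - 1) ^ 2) := by
          exact (((hbcont.comp (continuous_const.sub continuous_id)).div_const L).sub
            continuous_const).pow 2
        convert this using 1
        funext a; rw [hg]
      exact this.measurable
    · intro a
      rw [hg]
      have h0 : 0 ≤ b (t - a) / L := div_nonneg (hbnonneg _) hL.le
      have h1 : b (t - a) / L ≤ α / L := by
        have hb' := hbB (t - a); rw [abs_of_nonneg (hbnonneg _)] at hb'
        gcongr
      rw [abs_of_nonneg (sq_nonneg _)]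
      nlinarith
  -- Step 1 : b t = I * exp (L - I)
  have hbt : b t = I * Real.exp (L - I) := by
    rw [hrenewal t, hf, ← hIdef, hαL, show L - I = L + (-I) by ring, Real.exp_add]
    ring
  -- Step 2 : g (b t / L) ≤ (m - 1)^2
  have step2 : g (b t / L) ≤ (m - 1) ^ 2 := by
    rw [hg, hbt, hmdef]
    have key := ricker_contract hL2 hI0
    have e1 : (I * Real.exp (L - I) / L - 1) ^ 2
        = (I * Real.exp (L - I) - L) ^ 2 / L ^ 2 := by
      field_simp; try ring
    have e2 : (I / L - 1) ^ 2 = (I - L) ^ 2 / L ^ 2 := by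
      field_simp; try ring
    rw [e1, e2]
    exact div_le_div_of_nonneg_right key (by positivity)
  -- Step 3 : (m-1)^2 ≤ the integral, by convexity (Jensen via supporting line)
  have step3 : (m - 1) ^ 2
      ≤ ∫ a in Set.Ioi (0:ℝ), β a * Real.exp (-μ * a) * g (b (t - a) / L) := by
    have hlhs_int : IntegrableOn
        (fun a => K1 * (β a * Real.exp (-μ * a))
          + K2 * (β a * Real.exp (-μ * a) * b (t - a))) (Set.Ioi 0) :=
      (hw_int.const_mul K1).add (hwb_int.const_mul K2)
    have hptwise : ∀ a ∈ Set.Ioi (0:ℝ),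
        K1 * (β a * Real.exp (-μ * a)) + K2 * (β a * Real.exp (-μ * a) * b (t - a))
          ≤ β a * Real.exp (-μ * a) * g (b (t - a) / L) := by
      intro a _
      set w : ℝ := β a * Real.exp (-μ * a) with hw
      have hw0 : 0 ≤ w := mul_nonneg (hβnonneg a) (Real.exp_pos _).le
      set c : ℝ := b (t - a) / L with hc
      have hbc : b (t - a) = c * L := by
        rw [hc]; field_simp
      have hK2L : K2 * L = 2 * (m - 1) := by
        rw [hK2def]; field_simp
      have hK2' : K2 * (w * (c * L)) = 2 * (m - 1) * (w * c) := by
        rw [show K2 * (w * (c * L)) = K2 * L * (w * c) by ring, hK2L]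
      rw [hg, hbc, hK1def]
      nlinarith [mul_nonneg hw0 (sq_nonneg (c - m)), hK2']
    have hmono := setIntegral_mono_on hlhs_int hwg_int measurableSet_Ioi hptwise
    have hcomp : ∫ a in Set.Ioi (0:ℝ),
        (K1 * (β a * Real.exp (-μ * a))
          + K2 * (β a * Real.exp (-μ * a) * b (t - a))) = K1 + K2 * I := by
      rw [integral_add (hw_int.const_mul K1) (hwb_int.const_mul K2),
        integral_const_mul, integral_const_mul, hβnorm, ← hIdef]
      ring
    have hval : K1 + K2 * I = (m - 1) ^ 2 := by
      have hIm : I = m * L := by rw [hmdef]; field_simp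
      rw [hK1def, hK2def, hIm]
      field_simp
      try ring
    rw [hcomp, hval] at hmono
    exact hmono
  exact le_trans step2 step3
end

section
/- Let α > e and ω > 0. Then Δ(iω, α) = 0 if and only if there exists k ∈ ℕ such that ωτ + (n+1)·arctan( ω/(μ+κ) ) = (2k+1)·π and α = exp( 1 + (1 + ω²/(μ+κ)²)^{(n+1)/2} ). In this case Δ(−iω, α) = 0 as well. -/
open Filter

private lemma polar_eq_polar {a b u v : ℝ} (ha : 0 < a) (hb : 0 < b) :
    (a:ℂ) * Complex.exp ((u:ℂ) * Complex.I) = (b:ℂ) * Complex.exp ((v:ℂ) * Complex.I) ↔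
    a = b ∧ ∃ m : ℤ, u = v + 2 * Real.pi * m := by
  constructor
  · intro h
    have habs := congrArg (‖·‖) h
    simp only [norm_mul, Complex.norm_real, Complex.norm_exp_ofReal_mul_I, mul_one,
      Real.norm_eq_abs, abs_of_pos ha, abs_of_pos hb] at habs
    refine ⟨habs, ?_⟩
    rw [habs] at h
    have hbne : ((b:ℝ):ℂ) ≠ 0 := by exact_mod_cast hb.ne'
    have hexp : Complex.exp ((u:ℂ) * Complex.I) = Complex.exp ((v:ℂ) * Complex.I) :=
      mul_left_cancel₀ hbne h
    rw [Complex.exp_eq_exp_iff_exists_int] at hexp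
    obtain ⟨m, hm⟩ := hexp
    refine ⟨m, ?_⟩
    have h2 : ((u:ℂ)) * Complex.I = ((v + 2 * Real.pi * m : ℝ):ℂ) * Complex.I := by
      rw [hm]; push_cast; ring
    have h3 : ((u:ℂ)) = ((v + 2 * Real.pi * m : ℝ):ℂ) :=
      mul_right_cancel₀ Complex.I_ne_zero h2
    exact_mod_cast h3
  · rintro ⟨rfl, m, hm⟩
    rw [hm]
    congr 1
    have : ((v + 2 * Real.pi * m : ℝ):ℂ) * Complex.I
        = (v:ℂ) * Complex.I + (m:ℤ) * (2 * (Real.pi:ℂ) * Complex.I) := by push_cast; ring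
    rw [this, Complex.exp_add, Complex.exp_int_mul_two_pi_mul_I, mul_one]

/-- Purely imaginary characteristic roots: for `α > e` and `ω > 0`,
`Δ(iω, α) = 0` iff there is `k ∈ ℕ` with
`ωτ + (n+1) arctan(ω/(μ+κ)) = (2k+1)π` and
`α = exp(1 + (1 + ω²/(μ+κ)²)^{(n+1)/2})`; and in this case `Δ(-iω, α) = 0` too. -/
theorem characteristic_purely_imaginary_roots
    (μ τ κ : ℝ) (hμ : 0 < μ) (hτ : 0 < τ) (hκ : 0 < κ) (n : ℕ)
    (Δ : ℂ → ℝ → ℂ)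
    (hΔ : ∀ (lam : ℂ) (a : ℝ),
      Δ lam a = 1 - ((1 : ℂ) - (Real.log a : ℂ)) * Complex.exp (-lam * (τ : ℂ))
        * ((1 : ℂ) + lam / ((μ : ℂ) + (κ : ℂ))) ^ (-((n : ℤ) + 1)))
    (ω : ℝ) (hω : 0 < ω) (α : ℝ) (hα : Real.exp 1 < α) :
    (Δ (Complex.I * (ω : ℂ)) α = 0 ↔
      ∃ k : ℕ,
        ω * τ + ((n : ℝ) + 1) * Real.arctan (ω / (μ + κ)) = (2 * (k : ℝ) + 1) * Real.pi ∧
        α = Real.exp (1 + (1 + ω ^ 2 / (μ + κ) ^ 2) ^ (((n : ℝ) + 1) / 2))) ∧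
    (Δ (Complex.I * (ω : ℂ)) α = 0 → Δ (-(Complex.I * (ω : ℂ))) α = 0) := by
  have hs : (0:ℝ) < μ + κ := by linarith
  have hαpos : (0:ℝ) < α := lt_trans (Real.exp_pos 1) hα
  have hL1 : 1 < Real.log α := by
    have := Real.log_lt_log (Real.exp_pos 1) hα
    rwa [Real.log_exp] at this
  set L := Real.log α with hLdef
  set x : ℝ := ω / (μ + κ) with hxdef
  have hx : (0:ℝ) < x := div_pos hω hs
  set θ := Real.arctan x with hθdef
  have hθpos : 0 < θ := by
    rw [hθdef, ← Real.arctan_zero]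
    exact Real.arctan_strictMono hx
  set y : ℝ := 1 + x ^ 2 with hydef
  have hy1 : (1:ℝ) ≤ y := by nlinarith
  have hypos : (0:ℝ) < y := by linarith
  set r := Real.sqrt y with hrdef
  have hrpos : 0 < r := Real.sqrt_pos.mpr hypos
  have hrne : r ≠ 0 := hrpos.ne'
  -- y in statement form
  have hxx : ω ^ 2 / (μ + κ) ^ 2 = x ^ 2 := by rw [hxdef, div_pow]
  -- r^(n+1) as rpow
  have hrp : r ^ (n + 1) = y ^ (((n:ℝ) + 1) / 2) := by
    rw [hrdef, Real.sqrt_eq_rpow, ← Real.rpow_natCast (y ^ ((1:ℝ)/2)) (n+1),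
      ← Real.rpow_mul hypos.le]
    congr 1
    push_cast
    ring
  have hrppos : 0 < r ^ (n + 1) := pow_pos hrpos _
  -- complex setup
  set z : ℂ := (1 : ℂ) + (Complex.I * (ω : ℂ)) / ((μ : ℂ) + (κ : ℂ)) with hzdef
  have hsc : ((μ:ℂ) + (κ:ℂ)) = ((μ + κ : ℝ):ℂ) := by push_cast; ring
  have hscne : ((μ + κ : ℝ):ℂ) ≠ 0 := by exact_mod_cast hs.ne'
  have hzpolar : z = (r:ℂ) * Complex.exp ((θ:ℂ) * Complex.I) := by
    rw [hzdef, hsc, Complex.exp_mul_I, ← Complex.ofReal_cos, ← Complex.ofReal_sin,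
      hθdef, Real.cos_arctan, Real.sin_arctan, ← hydef, ← hrdef]
    have : (x:ℂ) = (ω:ℂ) / ((μ + κ : ℝ):ℂ) := by rw [hxdef]; push_cast; ring
    field_simp [hrne]
    rw [hxdef]
    push_cast
    have hrc : (r:ℂ) ≠ 0 := by exact_mod_cast hrne
    have hmk : (μ:ℂ) + (κ:ℂ) ≠ 0 := by rw [hsc]; exact hscne
    field_simp
  have hzne : z ≠ 0 := by
    rw [hzpolar]
    exact mul_ne_zero (by exact_mod_cast hrne) (Complex.exp_ne_zero _)
  have hzpow : z ^ (n + 1) ≠ 0 := pow_ne_zero _ hzne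
  -- rewrite Δ
  have hΔeq : Δ (Complex.I * (ω : ℂ)) α
      = 1 - ((1 : ℂ) - (L : ℂ)) * Complex.exp (-(Complex.I * (ω : ℂ)) * (τ : ℂ))
        * (z ^ (n + 1))⁻¹ := by
    rw [hΔ, show (-((n : ℤ) + 1)) = -((n + 1 : ℕ) : ℤ) by push_cast; ring, zpow_neg,
      zpow_natCast]
  -- main equation characterization
  have hzform : z ^ (n + 1)
      = ((r ^ (n+1) : ℝ):ℂ) * Complex.exp ((((n:ℝ)+1) * θ : ℝ) * Complex.I) := by
    rw [hzpolar, mul_pow, ← Complex.exp_nat_mul]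
    push_cast
    rw [mul_assoc]
  have hform : ((1 : ℂ) - (L:ℂ)) * Complex.exp (-(Complex.I * (ω:ℂ)) * (τ:ℂ))
      = ((L - 1 : ℝ):ℂ) * Complex.exp (((Real.pi - ω * τ : ℝ):ℂ) * Complex.I) := by
    rw [show ((Real.pi - ω * τ : ℝ):ℂ) * Complex.I
        = (Real.pi:ℂ) * Complex.I + -(Complex.I * (ω:ℂ)) * (τ:ℂ) by push_cast; ring,
      Complex.exp_add, Complex.exp_pi_mul_I]
    push_cast
    ring
  have hmain : Δ (Complex.I * (ω : ℂ)) α = 0 ↔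
      ((r ^ (n+1) : ℝ):ℂ) * Complex.exp ((((n:ℝ)+1) * θ : ℝ) * Complex.I)
        = ((L - 1 : ℝ):ℂ) * Complex.exp (((Real.pi - ω * τ : ℝ)) * Complex.I) := by
    rw [hΔeq, sub_eq_zero, eq_comm, mul_inv_eq_one₀ hzpow, hform, hzform, eq_comm]
  constructor
  · rw [hmain, polar_eq_polar hrppos (by linarith)]
    constructor
    · rintro ⟨hmod, m, hm⟩
      have hsum : ω * τ + ((n:ℝ) + 1) * θ = (2 * (m:ℝ) + 1) * Real.pi := by linarith
      have hm0 : 0 ≤ m := by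
        by_contra hneg
        push_neg at hneg
        have hm1' : m ≤ -1 := by omega
        have hm1 : (m:ℝ) ≤ -1 := by exact_mod_cast hm1'
        have hpos : 0 < ω * τ + ((n:ℝ) + 1) * θ := by positivity
        nlinarith [Real.pi_pos, hθpos.le, hω.le, hτ.le]
      refine ⟨m.toNat, ?_, ?_⟩
      · have hcast : ((m.toNat : ℕ):ℝ) = (m:ℝ) := by exact_mod_cast Int.toNat_of_nonneg hm0
        rw [hsum, hcast]
      · have hlog : L = 1 + y ^ (((n:ℝ) + 1) / 2) := by rw [← hrp]; linarith
        rw [hxx, ← hydef, ← hlog, hLdef, Real.exp_log hαpos]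
    · rintro ⟨k, hk, hαeq⟩
      have hlog : L = 1 + y ^ (((n:ℝ) + 1) / 2) := by
        rw [hLdef, hαeq, Real.log_exp, hxx, hydef]
      refine ⟨by rw [hrp]; linarith, k, by push_cast; nlinarith [hk]⟩
  · intro h
    have hconj : Δ (-(Complex.I * (ω : ℂ))) α = (starRingEnd ℂ) (Δ (Complex.I * (ω : ℂ)) α) := by
      rw [hΔ, hΔ]
      simp only [map_sub, map_one, map_mul, map_zpow₀, map_add, map_div₀,
        Complex.conj_ofReal, ← Complex.exp_conj, map_neg, Complex.conj_I]
      ring_nf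
    rw [hconj, h, map_zero]
end

section
/- The function h : [0,∞) → ℝ given by h(ω) = ωτ + (n+1)·arctan( ω/(μ+κ) ) is strictly increasing, satisfies h(0) = 0 and h(ω) → ∞ as ω → ∞, and consequently for every k ∈ ℕ there exists exactly one ω_k > 0 with h(ω_k) = (2k+1)·π. Moreover, for α_k = exp( 1 + (1 + ω_k²/(μ+κ)²)^{(n+1)/2} ), the characteristic function λ ↦ Δ(λ, α_k) vanishes at λ = ±i·ω_k. -/
open Filter


lemma key_pow (s : ℝ) (n : ℕ) :
    ((1 : ℂ) + (s : ℂ) * Complex.I) ^ (n + 1)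
      = ((Real.sqrt (1 + s ^ 2)) ^ (n + 1) : ℝ)
        * Complex.exp (((((n : ℝ) + 1) * Real.arctan s : ℝ) : ℂ) * Complex.I) := by
  have hpos : (0:ℝ) < Real.sqrt (1 + s ^ 2) := Real.sqrt_pos.2 (by positivity)
  have h1 : ((1 : ℂ) + (s : ℂ) * Complex.I)
      = ((Real.sqrt (1 + s ^ 2) : ℝ) : ℂ)
        * Complex.exp (((Real.arctan s : ℝ) : ℂ) * Complex.I) := by
    rw [Complex.exp_mul_I, ← Complex.ofReal_cos, ← Complex.ofReal_sin,
      Real.cos_arctan, Real.sin_arctan]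
    have hne : ((Real.sqrt (1 + s ^ 2) : ℝ) : ℂ) ≠ 0 := by
      exact_mod_cast (ne_of_gt hpos)
    push_cast
    field_simp
  rw [h1, mul_pow, ← Complex.exp_nat_mul]
  congr 1
  · push_cast; ring
  · push_cast; ring

lemma exp_odd_pi (j : ℤ) (hj : Odd j) :
    Complex.exp ((j : ℂ) * ((Real.pi : ℂ) * Complex.I)) = -1 := by
  rw [Complex.exp_int_mul, Complex.exp_pi_mul_I, hj.neg_one_zpow]

lemma delta_core (n : ℕ) (s b : ℝ)
    (hE : Complex.exp (-((b : ℝ) : ℂ) * Complex.I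
        + -(((((n : ℝ) + 1) * Real.arctan s : ℝ)) : ℂ) * Complex.I) = -1) :
    (1 : ℂ) - ((1:ℂ) - (((1 + (1 + s ^ 2) ^ (((n : ℝ) + 1) / 2) : ℝ)) : ℂ))
      * Complex.exp (-((b : ℝ) : ℂ) * Complex.I)
      * ((1:ℂ) + (s : ℂ) * Complex.I) ^ (-((n : ℤ) + 1)) = 0 := by
  have h1s : (0:ℝ) < 1 + s ^ 2 := by positivity
  have hA : (1 + s ^ 2) ^ (((n : ℝ) + 1) / 2) = Real.sqrt (1 + s ^ 2) ^ (n + 1) := by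
    rw [Real.sqrt_eq_rpow, ← Real.rpow_natCast ((1 + s ^ 2) ^ ((1:ℝ)/2)) (n+1),
      ← Real.rpow_mul h1s.le]
    congr 1
    push_cast
    ring
  have hzexp : (-((n : ℤ) + 1)) = -(((n + 1 : ℕ) : ℤ)) := by push_cast; ring
  rw [hA, hzexp, zpow_neg, zpow_natCast, key_pow]
  set P : ℝ := Real.sqrt (1 + s ^ 2) ^ (n + 1) with hP
  have hPpos : (0:ℝ) < P := by
    apply pow_pos (Real.sqrt_pos.2 h1s)
  have hPne : ((P : ℝ) : ℂ) ≠ 0 := by exact_mod_cast hPpos.ne'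
  have h2 : ((1:ℂ) - (((1 + P : ℝ)) : ℂ)) = -(P : ℂ) := by push_cast; ring
  rw [h2, mul_inv, ← Complex.exp_neg]
  have h3 : -((P:ℝ):ℂ) * Complex.exp (-((b : ℝ) : ℂ) * Complex.I)
      * (((P:ℝ):ℂ)⁻¹ * Complex.exp (-((((((n : ℝ) + 1) * Real.arctan s : ℝ)) : ℂ) * Complex.I)))
      = -(Complex.exp (-((b : ℝ) : ℂ) * Complex.I)
          * Complex.exp (-((((((n : ℝ) + 1) * Real.arctan s : ℝ)) : ℂ)) * Complex.I)) := by
    field_simp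
  rw [h3, ← Complex.exp_add, hE]
  ring


/-- The function `h(ω) = ωτ + (n+1) arctan(ω/(μ+κ))` is strictly
increasing on `[0,∞)`, `h(0) = 0`, `h(ω) → ∞` as `ω → ∞`; hence for every `k ∈ ℕ`
there is exactly one `ω_k > 0` with `h(ω_k) = (2k+1)π`, and for
`α_k = exp(1 + (1 + ω_k²/(μ+κ)²)^{(n+1)/2})` the characteristic function
`λ ↦ Δ(λ, α_k)` vanishes at `λ = ± i ω_k`. -/
theorem characteristic_roots_existence_uniqueness
    (μ τ κ : ℝ) (hμ : 0 < μ) (hτ : 0 < τ) (hκ : 0 < κ) (n : ℕ)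
    (Δ : ℂ → ℝ → ℂ)
    (hΔ : ∀ (lam : ℂ) (a : ℝ),
      Δ lam a = 1 - ((1 : ℂ) - (Real.log a : ℂ)) * Complex.exp (-lam * (τ : ℂ))
        * ((1 : ℂ) + lam / ((μ : ℂ) + (κ : ℂ))) ^ (-((n : ℤ) + 1)))
    (h : ℝ → ℝ)
    (hh : ∀ ω, h ω = ω * τ + ((n : ℝ) + 1) * Real.arctan (ω / (μ + κ))) :
    StrictMonoOn h (Set.Ici 0) ∧
    h 0 = 0 ∧
    Tendsto h atTop atTop ∧
    (∀ k : ℕ, ∃! ω : ℝ, 0 < ω ∧ h ω = (2 * (k : ℝ) + 1) * Real.pi) ∧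
    (∀ k : ℕ, ∀ ω : ℝ, 0 < ω → h ω = (2 * (k : ℝ) + 1) * Real.pi →
      Δ (Complex.I * (ω : ℂ))
          (Real.exp (1 + (1 + ω ^ 2 / (μ + κ) ^ 2) ^ (((n : ℝ) + 1) / 2))) = 0 ∧
      Δ (-(Complex.I * (ω : ℂ)))
          (Real.exp (1 + (1 + ω ^ 2 / (μ + κ) ^ 2) ^ (((n : ℝ) + 1) / 2))) = 0) := by
  have hm : (0:ℝ) < μ + κ := by linarith
  have hmono : StrictMonoOn h (Set.Ici 0) := by
    intro a _ b _ hab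
    rw [hh a, hh b]
    gcongr
  have h0 : h 0 = 0 := by simp [hh]
  have htop : Tendsto h atTop atTop := by
    apply tendsto_atTop_mono (f := fun ω : ℝ => ω * τ + ((n:ℝ)+1) * (-(Real.pi/2)))
    · intro ω
      rw [hh]
      have := Real.neg_pi_div_two_lt_arctan (ω / (μ + κ))
      have hn1 : (0:ℝ) < (n:ℝ) + 1 := by positivity
      nlinarith
    · exact tendsto_atTop_add_const_right _ _ (tendsto_id.atTop_mul_const hτ)
  have hcont : Continuous h := by
    have : h = fun ω => ω * τ + ((n : ℝ) + 1) * Real.arctan (ω / (μ + κ)) := funext hh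
    rw [this]
    exact (continuous_id.mul continuous_const).add
      (continuous_const.mul (Real.continuous_arctan.comp (continuous_id.div_const _)))
  have hexu : ∀ k : ℕ, ∃! ω : ℝ, 0 < ω ∧ h ω = (2 * (k : ℝ) + 1) * Real.pi := by
    intro k
    have hT : (0:ℝ) < (2 * (k : ℝ) + 1) * Real.pi := by positivity
    obtain ⟨b, hb1, hb2⟩ :=
      ((htop.eventually_ge_atTop ((2 * (k : ℝ) + 1) * Real.pi)).and
        (eventually_ge_atTop (0:ℝ))).exists
    have hIcc : (2 * (k : ℝ) + 1) * Real.pi ∈ Set.Icc (h 0) (h b) := by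
      constructor
      · rw [h0]; exact hT.le
      · exact hb1
    obtain ⟨ω, hωmem, hωeq⟩ := intermediate_value_Icc hb2 hcont.continuousOn hIcc
    have hωne : ω ≠ 0 := by
      rintro rfl
      rw [h0] at hωeq
      exact hT.ne hωeq
    refine ⟨ω, ⟨lt_of_le_of_ne hωmem.1 (Ne.symm hωne), hωeq⟩, ?_⟩
    rintro y ⟨hy, hyeq⟩
    exact hmono.injOn hy.le hωmem.1 (hyeq.trans hωeq.symm)
  refine ⟨hmono, h0, htop, hexu, ?_⟩
  intro k ω hωpos heq
  rw [hh] at heq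
  have hsum : ω * τ + ((n : ℝ) + 1) * Real.arctan (ω / (μ + κ)) = (2 * (k:ℝ) + 1) * Real.pi := heq
  have hmC : ((μ:ℂ) + (κ:ℂ)) = ((μ + κ : ℝ) : ℂ) := by push_cast; ring
  have hmCne : ((μ + κ : ℝ) : ℂ) ≠ 0 := by exact_mod_cast hm.ne'
  constructor
  · -- λ = I ω, s = ω/(μ+κ), b = ω τ
    rw [hΔ, Real.log_exp]
    have h_log : 1 + (1 + ω ^ 2 / (μ + κ) ^ 2) ^ (((n : ℝ) + 1) / 2)
        = 1 + (1 + (ω / (μ + κ)) ^ 2) ^ (((n : ℝ) + 1) / 2) := by rw [div_pow]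
    have h_exp : -(Complex.I * (ω : ℂ)) * (τ : ℂ) = -((ω * τ : ℝ) : ℂ) * Complex.I := by
      push_cast; ring
    have h_base : (1:ℂ) + (Complex.I * (ω : ℂ)) / ((μ:ℂ) + (κ:ℂ))
        = (1:ℂ) + ((ω / (μ + κ) : ℝ) : ℂ) * Complex.I := by
      rw [hmC]
      push_cast
      field_simp
    rw [h_log, h_exp, h_base]
    apply delta_core
    have h1 : (-((ω * τ : ℝ) : ℂ) * Complex.I
        + -(((((n : ℝ) + 1) * Real.arctan (ω / (μ + κ)) : ℝ)) : ℂ) * Complex.I)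
        = ((-(2 * (k:ℤ) + 1) : ℤ) : ℂ) * ((Real.pi : ℂ) * Complex.I) := by
      have hsumC := congrArg (fun r : ℝ => (r : ℂ)) hsum
      push_cast at hsumC ⊢
      linear_combination (-Complex.I) * hsumC
    rw [h1]
    exact exp_odd_pi _ ⟨-((k:ℤ)+1), by ring⟩
  · -- λ = -(I ω), s = -(ω/(μ+κ)), b = -(ω τ)
    rw [hΔ, Real.log_exp]
    have h_log : 1 + (1 + ω ^ 2 / (μ + κ) ^ 2) ^ (((n : ℝ) + 1) / 2)
        = 1 + (1 + (-(ω / (μ + κ))) ^ 2) ^ (((n : ℝ) + 1) / 2) := by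
      rw [show (1 + ω ^ 2 / (μ + κ) ^ 2 : ℝ) = 1 + (-(ω / (μ + κ))) ^ 2 by
        rw [neg_sq, div_pow]]
    have h_exp : -(-(Complex.I * (ω : ℂ))) * (τ : ℂ) = -((-(ω * τ) : ℝ) : ℂ) * Complex.I := by
      push_cast; ring
    have h_base : (1:ℂ) + (-(Complex.I * (ω : ℂ))) / ((μ:ℂ) + (κ:ℂ))
        = (1:ℂ) + ((-(ω / (μ + κ)) : ℝ) : ℂ) * Complex.I := by
      rw [hmC]
      push_cast
      field_simp
    rw [h_log, h_exp, h_base]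
    apply delta_core
    have h1 : (-((-(ω * τ) : ℝ) : ℂ) * Complex.I
        + -(((((n : ℝ) + 1) * Real.arctan (-(ω / (μ + κ))) : ℝ)) : ℂ) * Complex.I)
        = (((2 * (k:ℤ) + 1) : ℤ) : ℂ) * ((Real.pi : ℂ) * Complex.I) := by
      have hsumC := congrArg (fun r : ℝ => (r : ℂ)) hsum
      rw [Real.arctan_neg]
      push_cast at hsumC ⊢
      linear_combination Complex.I * hsumC
    rw [h1]
    exact exp_odd_pi _ ⟨(k:ℤ), by ring⟩
end

section
/- Fix k ∈ ℕ, and for each n ∈ ℕ let ω_k(n) > 0 be the unique positive solution of ω·τ + (n+1)·arctan( ω/(μ+κ) ) = (2k+1)·π, and set α_k(n) = exp( 1 + (1 + ω_k(n)²/(μ+κ)²)^{(n+1)/2} ). Then the sequence n ↦ ω_k(n) is strictly decreasing, ω_k(n) → 0 as n → ∞, (n+1)·ω_k(n) → (2k+1)·π·(μ+κ) as n → ∞, and α_k(n) → e² as n → ∞. -/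
open Filter

set_option maxHeartbeats 1000000

/-- Fix `k ∈ ℕ` and for each `n ∈ ℕ` let `ω_k(n) > 0` be the unique
positive solution of `ωτ + (n+1) arctan(ω/(μ+κ)) = (2k+1)π`, and set
`α_k(n) = exp(1 + (1 + ω_k(n)²/(μ+κ)²)^{(n+1)/2})`.  Then `n ↦ ω_k(n)` is strictly
decreasing, `ω_k(n) → 0`, `(n+1) ω_k(n) → (2k+1)π(μ+κ)`, and `α_k(n) → e²` as
`n → ∞`. -/
theorem characteristic_roots_limit_in_n
    (μ τ κ : ℝ) (hμ : 0 < μ) (hτ : 0 < τ) (hκ : 0 < κ) (k : ℕ)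
    (ω : ℕ → ℝ) (hωpos : ∀ n, 0 < ω n)
    (hωeq : ∀ n : ℕ,
      ω n * τ + ((n : ℝ) + 1) * Real.arctan (ω n / (μ + κ))
        = (2 * (k : ℝ) + 1) * Real.pi)
    (α : ℕ → ℝ)
    (hα : ∀ n : ℕ,
      α n = Real.exp (1 + (1 + (ω n) ^ 2 / (μ + κ) ^ 2) ^ (((n : ℝ) + 1) / 2))) :
    StrictAnti ω ∧
    Tendsto ω atTop (nhds 0) ∧
    Tendsto (fun n : ℕ => ((n : ℝ) + 1) * ω n) atTop
      (nhds ((2 * (k : ℝ) + 1) * Real.pi * (μ + κ))) ∧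
    Tendsto α atTop (nhds (Real.exp 2)) := by
  have hm0 : 0 < μ + κ := by positivity
  set c : ℝ := (2 * (k : ℝ) + 1) * Real.pi with hc
  have hc0 : 0 < c := by
    have := Real.pi_pos
    positivity
  set θ : ℕ → ℝ := fun n => Real.arctan (ω n / (μ + κ)) with hθdef
  have hθpos : ∀ n, 0 < θ n := fun n => by
    have h : Real.arctan 0 < Real.arctan (ω n / (μ + κ)) :=
      Real.arctan_strictMono (div_pos (hωpos n) hm0)
    rwa [Real.arctan_zero] at h
  have htan : ∀ n, Real.tan (θ n) = ω n / (μ + κ) := fun n => Real.tan_arctan _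
  have hω' : ∀ n, ω n = (μ + κ) * Real.tan (θ n) := fun n => by
    rw [htan]; field_simp
  -- strict antitonicity
  have hanti : StrictAnti ω := by
    apply strictAnti_nat_of_succ_lt
    intro n
    by_contra h
    push_neg at h
    have hθle : θ n ≤ θ (n + 1) := by
      exact Real.arctan_strictMono.monotone (by gcongr)
    have h1 := hωeq n
    have h2 := hωeq (n + 1)
    push_cast at h2
    have : c < c := by
      calc c = ω n * τ + ((n : ℝ) + 1) * θ n := (h1).symm
        _ < ω (n+1) * τ + ((n : ℝ) + 1 + 1) * θ (n+1) := by
            have := hθpos (n+1)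
            nlinarith [hθpos n]
        _ = c := h2
    exact lt_irrefl _ this
  -- θ → 0
  have hθtend : Tendsto θ atTop (nhds 0) := by
    have hub : ∀ n, θ n ≤ c / ((n : ℝ) + 1) := by
      intro n
      have h1 := hωeq n
      have hn1 : (0:ℝ) < (n : ℝ) + 1 := by positivity
      rw [le_div_iff₀ hn1]
      nlinarith [hωpos n, hτ]
    have hub' : Tendsto (fun n : ℕ => c / ((n : ℝ) + 1)) atTop (nhds 0) :=
      Tendsto.const_div_atTop (by exact tendsto_natCast_atTop_atTop.atTop_add tendsto_const_nhds) c
    refine tendsto_of_tendsto_of_tendsto_of_le_of_le tendsto_const_nhds hub'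
      (fun n => (hθpos n).le) hub
  -- ω → 0
  have hωtend : Tendsto ω atTop (nhds 0) := by
    have hcont : ContinuousAt Real.tan 0 :=
      (Real.hasDerivAt_tan (by simp)).continuousAt
    have : Tendsto (fun n => (μ + κ) * Real.tan (θ n)) atTop (nhds ((μ + κ) * Real.tan 0)) :=
      (tendsto_const_nhds.mul ((hcont.tendsto).comp hθtend))
    simp only [Real.tan_zero, mul_zero] at this
    exact this.congr (fun n => (hω' n).symm)
  -- (n+1) θ n → c
  have hnθ : Tendsto (fun n : ℕ => ((n : ℝ) + 1) * θ n) atTop (nhds c) := by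
    have : ∀ n : ℕ, ((n : ℝ) + 1) * θ n = c - ω n * τ := by
      intro n; have := hωeq n; linarith
    have h2 : Tendsto (fun n : ℕ => c - ω n * τ) atTop (nhds (c - 0 * τ)) :=
      tendsto_const_nhds.sub (hωtend.mul tendsto_const_nhds)
    simp only [zero_mul, sub_zero] at h2
    exact h2.congr (fun n => (this n).symm)
  -- tan θ / θ → 1
  have hslope : Tendsto (fun n => Real.tan (θ n) / θ n) atTop (nhds 1) := by
    have hd : HasDerivAt Real.tan 1 0 := by
      have := Real.hasDerivAt_tan (x := 0) (by simp)
      simpa using this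
    have h1 := hasDerivAt_iff_tendsto_slope.mp hd
    have hθ0 : Tendsto θ atTop (nhdsWithin 0 {(0:ℝ)}ᶜ) :=
      tendsto_nhdsWithin_of_tendsto_nhds_of_eventually_within _ hθtend
        (Eventually.of_forall fun n => (hθpos n).ne')
    have := h1.comp hθ0
    refine this.congr (fun n => ?_)
    simp [slope_def_field, Real.tan_zero, Function.comp]
  -- (n+1) ω n → c (μ+κ)
  have hnω : Tendsto (fun n : ℕ => ((n : ℝ) + 1) * ω n) atTop (nhds (c * (μ + κ))) := by
    have key : ∀ n : ℕ, ((n : ℝ) + 1) * ω n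
        = (μ + κ) * (((n : ℝ) + 1) * θ n) * (Real.tan (θ n) / θ n) := by
      intro n
      rw [hω' n]
      field_simp [(hθpos n).ne']
    have h2 : Tendsto (fun n : ℕ => (μ + κ) * (((n : ℝ) + 1) * θ n) * (Real.tan (θ n) / θ n))
        atTop (nhds ((μ + κ) * c * 1)) :=
      ((tendsto_const_nhds.mul hnθ).mul hslope)
    rw [mul_one, mul_comm] at h2
    exact h2.congr (fun n => (key n).symm)
  -- α → e²
  have hαtend : Tendsto α atTop (nhds (Real.exp 2)) := by
    set E : ℕ → ℝ := fun n => (((n : ℝ) + 1) / 2) * Real.log (1 + (ω n) ^ 2 / (μ + κ) ^ 2)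
      with hE
    have hx : ∀ n, (0:ℝ) < 1 + (ω n) ^ 2 / (μ + κ) ^ 2 := fun n => by positivity
    have hE0 : Tendsto E atTop (nhds 0) := by
      have hlb : ∀ n, 0 ≤ E n := by
        intro n
        have h2 : (0:ℝ) ≤ (ω n) ^ 2 / (μ + κ) ^ 2 := by positivity
        have h3 : (0:ℝ) ≤ Real.log (1 + (ω n) ^ 2 / (μ + κ) ^ 2) :=
          Real.log_nonneg (by linarith)
        have h4 : (0:ℝ) ≤ ((n : ℝ) + 1) / 2 := by positivity
        exact mul_nonneg h4 h3
      have hub : ∀ n, E n ≤ (((n : ℝ) + 1) * ω n) * (ω n / (2 * (μ + κ) ^ 2)) := by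
        intro n
        have hlog : Real.log (1 + (ω n) ^ 2 / (μ + κ) ^ 2) ≤ (ω n) ^ 2 / (μ + κ) ^ 2 := by
          have := Real.log_le_sub_one_of_pos (hx n)
          linarith
        have hn1 : (0:ℝ) ≤ ((n : ℝ) + 1) / 2 := by positivity
        calc E n ≤ (((n : ℝ) + 1) / 2) * ((ω n) ^ 2 / (μ + κ) ^ 2) := by
              exact mul_le_mul_of_nonneg_left hlog hn1
          _ = (((n : ℝ) + 1) * ω n) * (ω n / (2 * (μ + κ) ^ 2)) := by
              field_simp
      have hubt : Tendsto (fun n : ℕ => (((n : ℝ) + 1) * ω n) * (ω n / (2 * (μ + κ) ^ 2)))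
          atTop (nhds (c * (μ + κ) * (0 / (2 * (μ + κ) ^ 2)))) :=
        hnω.mul (hωtend.div_const _)
      simp only [zero_div, mul_zero] at hubt
      exact tendsto_of_tendsto_of_tendsto_of_le_of_le tendsto_const_nhds hubt hlb hub
    have hrw : ∀ n, α n = Real.exp (1 + Real.exp (E n)) := by
      intro n
      rw [hα n, Real.rpow_def_of_pos (hx n)]
      simp only [hE]
      ring_nf
    have : Tendsto (fun n => Real.exp (1 + Real.exp (E n))) atTop
        (nhds (Real.exp (1 + Real.exp 0))) :=
      (Real.continuous_exp.tendsto _).comp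
        (tendsto_const_nhds.add ((Real.continuous_exp.tendsto _).comp hE0))
    simp only [Real.exp_zero] at this
    norm_num at this
    exact this.congr (fun n => (hrw n).symm)
  exact ⟨hanti, hωtend, hnω, hαtend⟩
end
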